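/- arXiv:1810.08839 — 2 statements merged into one kernel-verified Lean document; each statement's English description precedes it below -/
import Mathlib

section
/- Let k ≥ 0, r ≥ 0 and n be integers with k + r ≤ n, and let f : [0,1] → ℝ be r times continuously differentiable. Then sup_{x∈[0,1]} |(Q_n^k f)^{(r)}(x) − Q_{n−r}^k(f^{(r)})(x)| ≤ ((2k+r−1)r/(2n))·‖f^{(r)}‖ + ω(f^{(r)}, (k+r)/n). -/
/-- Bernstein basis polynomial `p_{n,k}(x) = C(n,k) x^k (1-x)^{n-k}`. -/
noncomputable def bern (n k : ℕ) (x : ℝ) : ℝ :=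
  (n.choose k : ℝ) * x ^ k * (1 - x) ^ (n - k)

/-- Bernstein operator `B_n(f;x) = Σ_{j=0}^n p_{n,j}(x) f(j/n)`. -/
noncomputable def bernsteinOp (n : ℕ) (f : ℝ → ℝ) (x : ℝ) : ℝ :=
  ∑ j ∈ Finset.range (n + 1), bern n j x * f ((j : ℝ) / (n : ℝ))

/-- An antiderivative: `(antider g) x = ∫₀ˣ g(t) dt`. -/
noncomputable def antider (g : ℝ → ℝ) : ℝ → ℝ :=
  fun x => ∫ t in (0:ℝ)..x, g t

/-- The operator `Q_n^k f = (n^k (n-k)! / n!) (B_n (f^{(-k)}))^{(k)}`, where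
`f^{(-k)}` is an antiderivative of order `k` of `f` (its choice does not affect
the value of `Q_n^k f`; here we take iterated integrals starting at `0`). -/
noncomputable def Qop (n k : ℕ) (f : ℝ → ℝ) (x : ℝ) : ℝ :=
  ((n : ℝ) ^ k * ((n - k).factorial : ℝ) / (n.factorial : ℝ)) *
    iteratedDeriv k (bernsteinOp n (antider^[k] f)) x

/-- Supremum norm on `[0,1]`. -/
noncomputable def supNorm (g : ℝ → ℝ) : ℝ :=
  ⨆ x : Set.Icc (0:ℝ) 1, |g x|

/-- First modulus of continuity on `[0,1]`. -/
noncomputable def modCont (g : ℝ → ℝ) (δ : ℝ) : ℝ :=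
  sSup {d : ℝ | ∃ x ∈ Set.Icc (0:ℝ) 1, ∃ y ∈ Set.Icc (0:ℝ) 1, |x - y| ≤ δ ∧ d = |g x - g y|}

/-- sequence finite difference -/
noncomputable def Dseq (c : ℕ → ℝ) : ℕ → ℝ := fun j => c (j + 1) - c j

/-- function finite difference with step h -/
noncomputable def fdiff (h : ℝ) (g : ℝ → ℝ) : ℝ → ℝ := fun t => g (t + h) - g t

lemma bern_hasDerivAt (ν j : ℕ) (x : ℝ) :
    HasDerivAt (bern ν j)
      ((ν.choose j : ℝ) * (j * x ^ (j - 1) * (1 - x) ^ (ν - j)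
        - (ν - j : ℕ) * x ^ j * (1 - x) ^ (ν - j - 1))) x := by
  have h1 : HasDerivAt (fun y : ℝ => y ^ j) ((j : ℝ) * x ^ (j - 1)) x := hasDerivAt_pow j x
  have h2 : HasDerivAt (fun y : ℝ => (1 - y) ^ (ν - j))
      (((ν - j : ℕ) : ℝ) * (1 - x) ^ (ν - j - 1) * (-1)) x := by
    have hin : HasDerivAt (fun y : ℝ => 1 - y) (-1) x := (hasDerivAt_id x).const_sub 1
    exact (hasDerivAt_pow (ν - j) (1 - x)).comp x hin
  have h3 := ((h1.fun_mul h2).const_mul ((ν.choose j : ℝ)))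
  have heq : bern ν j = fun y : ℝ => (ν.choose j : ℝ) * (y ^ j * (1 - y) ^ (ν - j)) := by
    funext y; simp [bern, mul_assoc]
  rw [heq]
  exact h3.congr_deriv (by ring)

lemma sum_bern_deriv (ν : ℕ) (hν : 1 ≤ ν) (c : ℕ → ℝ) (x : ℝ) :
    deriv (fun y => ∑ j ∈ Finset.range (ν + 1), bern ν j y * c j) x
      = ν * ∑ j ∈ Finset.range ν, bern (ν - 1) j x * Dseq c j := by
  have hd : ∀ j ∈ Finset.range (ν + 1), HasDerivAt (fun y => bern ν j y * c j)
      (((ν.choose j : ℝ) * (j * x ^ (j - 1) * (1 - x) ^ (ν - j)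
        - (ν - j : ℕ) * x ^ j * (1 - x) ^ (ν - j - 1))) * c j) x := by
    intro j _
    exact (bern_hasDerivAt ν j x).mul_const (c j)
  have hD : HasDerivAt (fun y => ∑ j ∈ Finset.range (ν + 1), bern ν j y * c j)
      (∑ j ∈ Finset.range (ν + 1), ((ν.choose j : ℝ) * (j * x ^ (j - 1) * (1 - x) ^ (ν - j)
        - (ν - j : ℕ) * x ^ j * (1 - x) ^ (ν - j - 1))) * c j) x :=
    HasDerivAt.fun_sum hd
  rw [hD.deriv]
  -- split the sum
  have split : ∀ j ∈ Finset.range (ν + 1),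
      ((ν.choose j : ℝ) * (j * x ^ (j - 1) * (1 - x) ^ (ν - j)
        - (ν - j : ℕ) * x ^ j * (1 - x) ^ (ν - j - 1))) * c j
      = (ν.choose j : ℝ) * j * x ^ (j - 1) * (1 - x) ^ (ν - j) * c j
        - (ν.choose j : ℝ) * (ν - j : ℕ) * x ^ j * (1 - x) ^ (ν - j - 1) * c j := by
    intro j _; ring
  rw [Finset.sum_congr rfl split, Finset.sum_sub_distrib]
  -- first sum: drop j = 0 term, reindex
  have e1 : ∑ j ∈ Finset.range (ν + 1),
      (ν.choose j : ℝ) * j * x ^ (j - 1) * (1 - x) ^ (ν - j) * c j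
      = ∑ j ∈ Finset.range ν, (ν : ℝ) * ((ν-1).choose j : ℝ) * x ^ j * (1 - x) ^ (ν - 1 - j) * c (j+1) := by
    rw [Finset.sum_range_succ' (fun j => (ν.choose j : ℝ) * j * x ^ (j - 1) * (1 - x) ^ (ν - j) * c j) ν]
    simp only [Nat.cast_zero, mul_zero, zero_mul, add_zero, Nat.choose_zero_right]
    apply Finset.sum_congr rfl
    intro j hj
    have hco : (ν : ℝ) * ((ν-1).choose j : ℝ) = (ν.choose (j+1) : ℝ) * (j+1 : ℕ) := by
      have := Nat.add_one_mul_choose_eq (ν - 1) j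
      have hs : (ν - 1) + 1 = ν := Nat.succ_pred_eq_of_pos hν
      rw [hs] at this
      exact_mod_cast congrArg (Nat.cast : ℕ → ℝ) this
    have hsub : ν - (j + 1) = ν - 1 - j := by omega
    rw [hsub]
    have hj1 : j + 1 - 1 = j := rfl
    rw [hj1]
    linear_combination (x ^ j * (1 - x) ^ (ν - 1 - j) * c (j + 1)) * hco.symm
  -- second sum: drop j = ν term
  have e2 : ∑ j ∈ Finset.range (ν + 1),
      (ν.choose j : ℝ) * (ν - j : ℕ) * x ^ j * (1 - x) ^ (ν - j - 1) * c j
      = ∑ j ∈ Finset.range ν, (ν : ℝ) * ((ν-1).choose j : ℝ) * x ^ j * (1 - x) ^ (ν - 1 - j) * c j := by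
    rw [Finset.sum_range_succ]
    simp only [Nat.sub_self, Nat.cast_zero, mul_zero, zero_mul, add_zero]
    apply Finset.sum_congr rfl
    intro j hj
    have hj' : j < ν := Finset.mem_range.mp hj
    have hco : (ν.choose j : ℕ) * (ν - j) = ν * ((ν-1).choose j) := by
      have h1 := Nat.choose_succ_right_eq ν j
      have h2 := Nat.add_one_mul_choose_eq (ν - 1) j
      have hs : (ν - 1) + 1 = ν := Nat.succ_pred_eq_of_pos hν
      rw [hs] at h2
      rw [← h1, ← h2]
    have hco' : (ν.choose j : ℝ) * ((ν - j : ℕ) : ℝ) = (ν : ℝ) * ((ν-1).choose j : ℝ) := by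
      exact_mod_cast congrArg (Nat.cast : ℕ → ℝ) hco
    have hsub : ν - j - 1 = ν - 1 - j := by omega
    rw [hsub]
    linear_combination (x ^ j * (1 - x) ^ (ν - 1 - j) * c j) * hco'
  rw [e1, e2, Finset.mul_sum, ← Finset.sum_sub_distrib]
  apply Finset.sum_congr rfl
  intro j hj
  simp only [Dseq, bern]
  ring


lemma Dseq_iter_const_mul (m : ℕ) (C : ℝ) (c : ℕ → ℝ) :
    Dseq^[m] (fun j => C * c j) = fun j => C * Dseq^[m] c j := by
  induction m with
  | zero => simp
  | succ m ih =>
    rw [Function.iterate_succ_apply', Function.iterate_succ_apply', ih]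
    funext j
    simp [Dseq]
    ring

lemma Dseq_iter_eq_fdiff (n : ℕ) (g : ℝ → ℝ) (m : ℕ) :
    Dseq^[m] (fun j => g ((j : ℝ) / (n : ℝ))) = fun j : ℕ => (fdiff (1 / (n:ℝ)))^[m] g ((j : ℝ) / (n : ℝ)) := by
  induction m with
  | zero => simp
  | succ m ih =>
    rw [Function.iterate_succ_apply', Function.iterate_succ_apply', ih]
    funext j
    simp only [Dseq, fdiff]
    have : ((j : ℝ) + 1) / (n : ℝ) = (j : ℝ) / n + 1 / n := by rw [add_div]
    push_cast
    rw [this]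

lemma iteratedDeriv_bern_sum (m : ℕ) : ∀ (ν : ℕ), m ≤ ν → ∀ (c : ℕ → ℝ) (x : ℝ),
    iteratedDeriv m (fun y => ∑ j ∈ Finset.range (ν + 1), bern ν j y * c j) x
      = ((ν.factorial : ℝ) / ((ν - m).factorial : ℝ)) *
          ∑ j ∈ Finset.range (ν - m + 1), bern (ν - m) j x * Dseq^[m] c j := by
  induction m with
  | zero => intro ν _ c x; simp [div_self (a := (ν.factorial : ℝ)) (by positivity)]
  | succ m ih =>
    intro ν hm c x
    have hν : 1 ≤ ν := le_trans (Nat.succ_le_succ (Nat.zero_le m)) hm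
    rw [iteratedDeriv_succ']
    have hder : deriv (fun y => ∑ j ∈ Finset.range (ν + 1), bern ν j y * c j)
        = fun y => ∑ j ∈ Finset.range ((ν - 1) + 1), bern (ν - 1) j y * ((ν : ℝ) * Dseq c j) := by
      funext y
      rw [sum_bern_deriv ν hν c y, Finset.mul_sum]
      rw [Nat.sub_add_cancel hν]
      apply Finset.sum_congr rfl
      intro j _; ring
    rw [hder, ih (ν - 1) (by omega) (fun j => (ν : ℝ) * Dseq c j) x]
    rw [Dseq_iter_const_mul]
    have h1 : ν - 1 - m = ν - (m + 1) := by omega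
    have h2 : ∀ j, Dseq^[m] (Dseq c) j = Dseq^[m + 1] c j := by
      intro j; rw [Function.iterate_succ_apply]
    have h3 : ((ν.factorial : ℝ) / ((ν - (m+1)).factorial : ℝ))
        = ((ν - 1).factorial : ℝ) / (((ν - 1) - m).factorial : ℝ) * (ν : ℝ) := by
      rw [h1]
      have hfac : ν.factorial = ν * (ν - 1).factorial := by
        cases ν with
        | zero => omega
        | succ w => simp [Nat.factorial_succ]
      rw [hfac]
      push_cast
      ring
    rw [h3, h1, Finset.mul_sum, Finset.mul_sum]
    apply Finset.sum_congr rfl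
    intro j _
    rw [← h2 j]
    simp only []
    ring


lemma antider_hasDerivAt (g : ℝ → ℝ) (hg : Continuous g) (x : ℝ) :
    HasDerivAt (antider g) (g x) x :=
  intervalIntegral.integral_hasDerivAt_right (hg.intervalIntegrable 0 x)
    (hg.stronglyMeasurableAtFilter _ _) hg.continuousAt

lemma deriv_antider (g : ℝ → ℝ) (hg : Continuous g) : deriv (antider g) = g := by
  funext x; exact (antider_hasDerivAt g hg x).deriv

lemma contDiff_antider (s : ℕ) (g : ℝ → ℝ) (hg : ContDiff ℝ s g) :
    ContDiff ℝ (s + 1 : ℕ) (antider g) := by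
  have : ((s + 1 : ℕ) : WithTop ℕ∞) = (s : WithTop ℕ∞) + 1 := by push_cast; rfl
  rw [this, contDiff_succ_iff_deriv]
  refine ⟨fun x => (antider_hasDerivAt g hg.continuous x).differentiableAt, by simp, ?_⟩
  rw [deriv_antider g hg.continuous]; exact hg

lemma contDiff_antider_iterate (k r : ℕ) (f : ℝ → ℝ) (hf : ContDiff ℝ r f) :
    ContDiff ℝ (k + r : ℕ) (antider^[k] f) := by
  induction k with
  | zero => simpa using hf
  | succ k ih =>
    rw [Function.iterate_succ_apply']
    have := contDiff_antider (k + r) (antider^[k] f) ih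
    have he : (k + r) + 1 = (k + 1) + r := by omega
    rwa [he] at this

lemma iteratedDeriv_antider_iterate (k r : ℕ) (f : ℝ → ℝ) (hf : ContDiff ℝ r f) :
    iteratedDeriv (k + r) (antider^[k] f) = iteratedDeriv r f := by
  induction k with
  | zero => simp
  | succ k ih =>
    rw [Function.iterate_succ_apply']
    have he : (k + 1) + r = (k + r) + 1 := by omega
    rw [he, iteratedDeriv_succ']
    have hc : Continuous (antider^[k] f) := (contDiff_antider_iterate k r f hf).continuous
    rw [deriv_antider _ hc, ih]

lemma fdiff_iter_mvt (m : ℕ) : ∀ (F : ℝ → ℝ), ContDiff ℝ m F → ∀ (h : ℝ), (0 < h ∨ m = 0) →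
    ∀ (t : ℝ), ∃ ξ ∈ Set.Icc t (t + m * h), (fdiff h)^[m] F t = h ^ m * iteratedDeriv m F ξ := by
  induction m with
  | zero =>
    intro F _ h _ t
    exact ⟨t, by simp, by simp⟩
  | succ m ih =>
    intro F hF h hh t
    have hpos : 0 < h := hh.resolve_right (by omega)
    have hFm : ContDiff ℝ (m + 1 : ℕ) F := hF
    -- the difference function
    have hdiffF : ContDiff ℝ (m : ℕ) (fdiff h F) := by
      have h1 : ContDiff ℝ (m : ℕ) (fun y : ℝ => F (y + h)) :=
        (hF.of_le (by exact_mod_cast Nat.cast_le.mpr (Nat.le_succ m))).comp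
          (contDiff_id.add contDiff_const)
      have h2 : ContDiff ℝ (m : ℕ) F := hF.of_le (by exact_mod_cast Nat.cast_le.mpr (Nat.le_succ m))
      exact h1.sub h2
    rw [Function.iterate_succ_apply]
    obtain ⟨ξ₁, hξ₁, heq⟩ := ih (fdiff h F) hdiffF h (Or.inl hpos) t
    -- iteratedDeriv m of the difference
    have hkey : iteratedDeriv m (fdiff h F) ξ₁
        = iteratedDeriv m F (ξ₁ + h) - iteratedDeriv m F ξ₁ := by
      have h1 : ContDiff ℝ (m : ℕ) (fun y : ℝ => F (y + h)) :=
        (hF.of_le (by exact_mod_cast Nat.cast_le.mpr (Nat.le_succ m))).comp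
          (contDiff_id.add contDiff_const)
      have h2 : ContDiff ℝ (m : ℕ) F := hF.of_le (by exact_mod_cast Nat.cast_le.mpr (Nat.le_succ m))
      have hsub : iteratedDeriv m ((fun y : ℝ => F (y + h)) - F) ξ₁
          = iteratedDeriv m (fun y : ℝ => F (y + h)) ξ₁ - iteratedDeriv m F ξ₁ := by
        simp_rw [← iteratedDerivWithin_univ]
        exact iteratedDerivWithin_sub (Set.mem_univ ξ₁) uniqueDiffOn_univ
          h1.contDiffAt.contDiffWithinAt h2.contDiffAt.contDiffWithinAt
      have hfd : fdiff h F = (fun y : ℝ => F (y + h)) - F := by funext y; simp [fdiff]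
      rw [hfd, hsub, iteratedDeriv_comp_add_const m F h]
    -- MVT for iteratedDeriv m F on [ξ₁, ξ₁ + h]
    have hG : ∀ y : ℝ, HasDerivAt (iteratedDeriv m F) (iteratedDeriv (m + 1) F y) y := by
      intro y
      have hd : Differentiable ℝ (iteratedDeriv m F) :=
        hFm.differentiable_iteratedDeriv m (by exact_mod_cast Nat.lt_succ_self m)
      have := (hd y).hasDerivAt
      rwa [← iteratedDeriv_succ] at this
    obtain ⟨ξ₂, hξ₂, hslope⟩ := exists_hasDerivAt_eq_slope (iteratedDeriv m F)
      (iteratedDeriv (m + 1) F) (by linarith : ξ₁ < ξ₁ + h)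
      (Continuous.continuousOn (by
        exact hFm.continuous_iteratedDeriv m (by exact_mod_cast Nat.le_succ m)))
      (fun y _ => hG y)
    refine ⟨ξ₂, ⟨?_, ?_⟩, ?_⟩
    · have := hξ₁.1; have := hξ₂.1; linarith
    · have := hξ₁.2; have := hξ₂.2; push_cast; nlinarith [hpos.le]
    · rw [heq, hkey, hslope]
      field_simp
      linear_combination (-(h ^ m * iteratedDeriv m F (ξ₁ + h) - h ^ m * iteratedDeriv m F ξ₁)) * (mul_inv_cancel₀ hpos.ne')


lemma bern_nonneg (ν j : ℕ) {x : ℝ} (hx : x ∈ Set.Icc (0:ℝ) 1) : 0 ≤ bern ν j x := by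
  have h1 : (0:ℝ) ≤ x := hx.1
  have h2 : (0:ℝ) ≤ 1 - x := by linarith [hx.2]
  unfold bern
  positivity

lemma bern_sum_one (ν : ℕ) (x : ℝ) : ∑ j ∈ Finset.range (ν + 1), bern ν j x = 1 := by
  have := add_pow x (1 - x) ν
  simp only [add_sub_cancel, one_pow] at this
  rw [show (1:ℝ) = (x + (1 - x)) ^ ν by rw [show x + (1-x) = 1 by ring]; simp]
  rw [add_pow x (1 - x) ν]
  apply Finset.sum_congr rfl
  intro j _
  unfold bern
  ring

lemma fact_ratio (a : ℕ) : ∀ (r : ℕ),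
    (((a + r).factorial : ℝ)) = (a.factorial : ℝ) * ∏ i ∈ Finset.range r, ((a : ℝ) + i + 1) := by
  intro r
  induction r with
  | zero => simp
  | succ r ih =>
    have : a + (r + 1) = (a + r) + 1 := by omega
    rw [this, Nat.factorial_succ, Finset.prod_range_succ]
    push_cast
    rw [ih]
    ring

lemma one_sub_prod_le (s : Finset ℕ) (g : ℕ → ℝ) (h0 : ∀ i ∈ s, 0 ≤ g i) (h1 : ∀ i ∈ s, g i ≤ 1) :
    1 - ∏ i ∈ s, g i ≤ ∑ i ∈ s, (1 - g i) := by
  induction s using Finset.induction with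
  | empty => simp
  | @insert a s ha ih =>
    rw [Finset.prod_insert ha, Finset.sum_insert ha]
    have hP0 : 0 ≤ ∏ i ∈ s, g i := Finset.prod_nonneg (fun i hi => h0 i (Finset.mem_insert_of_mem hi))
    have hP1 : ∏ i ∈ s, g i ≤ 1 := Finset.prod_le_one (fun i hi => h0 i (Finset.mem_insert_of_mem hi)) (fun i hi => h1 i (Finset.mem_insert_of_mem hi))
    have hga0 : 0 ≤ g a := h0 a (Finset.mem_insert_self a s)
    have hga1 : g a ≤ 1 := h1 a (Finset.mem_insert_self a s)
    have ihs : 1 - ∏ i ∈ s, g i ≤ ∑ i ∈ s, (1 - g i) :=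
      ih (fun i hi => h0 i (Finset.mem_insert_of_mem hi)) (fun i hi => h1 i (Finset.mem_insert_of_mem hi))
    nlinarith

lemma sum_range_cast (r : ℕ) : (∑ i ∈ Finset.range r, (i:ℝ)) = r * (r - 1) / 2 := by
  induction r with
  | zero => simp
  | succ m ih => rw [Finset.sum_range_succ, ih]; push_cast; ring

section gbounds
variable (g : ℝ → ℝ) (hg : Continuous g)

include hg in
lemma exists_bound : ∃ C : ℝ, (∀ x ∈ Set.Icc (0:ℝ) 1, |g x| ≤ C) := by
  obtain ⟨C, hC⟩ := (isCompact_Icc (a := (0:ℝ)) (b := 1)).exists_bound_of_continuousOn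
    hg.continuousOn
  exact ⟨C, fun x hx => by simpa [Real.norm_eq_abs] using hC x hx⟩

include hg in
lemma supNorm_spec : (∀ x ∈ Set.Icc (0:ℝ) 1, |g x| ≤ supNorm g) ∧ 0 ≤ supNorm g := by
  obtain ⟨C, hC⟩ := exists_bound g hg
  have hb : BddAbove (Set.range (fun x : Set.Icc (0:ℝ) 1 => |g x|)) := by
    refine ⟨C, ?_⟩
    rintro y ⟨⟨x, hx⟩, rfl⟩
    exact hC x hx
  have h1 : ∀ x ∈ Set.Icc (0:ℝ) 1, |g x| ≤ supNorm g := by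
    intro x hx
    exact le_ciSup hb (⟨x, hx⟩ : Set.Icc (0:ℝ) 1)
  refine ⟨h1, le_trans (abs_nonneg (g 0)) (h1 0 (by norm_num))⟩

include hg in
lemma modCont_spec (δ : ℝ) (hδ : 0 ≤ δ) :
    (∀ x ∈ Set.Icc (0:ℝ) 1, ∀ y ∈ Set.Icc (0:ℝ) 1, |x - y| ≤ δ → |g x - g y| ≤ modCont g δ)
      ∧ 0 ≤ modCont g δ := by
  obtain ⟨C, hC⟩ := exists_bound g hg
  have hb : BddAbove {d : ℝ | ∃ x ∈ Set.Icc (0:ℝ) 1, ∃ y ∈ Set.Icc (0:ℝ) 1, |x - y| ≤ δ ∧ d = |g x - g y|} := by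
    refine ⟨2 * C, ?_⟩
    rintro d ⟨x, hx, y, hy, _, rfl⟩
    calc |g x - g y| ≤ |g x| + |g y| := abs_sub _ _
      _ ≤ 2 * C := by linarith [hC x hx, hC y hy]
  have h1 : ∀ x ∈ Set.Icc (0:ℝ) 1, ∀ y ∈ Set.Icc (0:ℝ) 1, |x - y| ≤ δ → |g x - g y| ≤ modCont g δ := by
    intro x hx y hy hxy
    exact le_csSup hb ⟨x, hx, y, hy, hxy, rfl⟩
  refine ⟨h1, ?_⟩
  have := h1 0 (by norm_num) 0 (by norm_num) (by simpa using hδ)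
  simpa using this
end gbounds


set_option maxHeartbeats 2000000 in
theorem Qop_derivative_difference
    (n k r : ℕ) (hkr : k + r ≤ n) (f : ℝ → ℝ) (hf : ContDiff ℝ r f) :
    ∀ x ∈ Set.Icc (0:ℝ) 1,
      |iteratedDeriv r (Qop n k f) x - Qop (n - r) k (iteratedDeriv r f) x| ≤
        (2 * (k : ℝ) + (r : ℝ) - 1) * (r : ℝ) / (2 * (n : ℝ)) * supNorm (iteratedDeriv r f)
          + modCont (iteratedDeriv r f) (((k : ℝ) + (r : ℝ)) / (n : ℝ)) := by
  intro x hx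
  have hg : Continuous (iteratedDeriv r f) := hf.continuous_iteratedDeriv r le_rfl
  rcases Nat.eq_zero_or_pos r with hr0 | hrpos
  · subst hr0
    simp only [iteratedDeriv_zero] at hg ⊢
    simp only [Nat.cast_zero, Nat.sub_zero, mul_zero, zero_div, zero_mul, sub_self,
      abs_zero, zero_add, add_zero]
    exact (modCont_spec f hg _ (by positivity)).2
  -- main case : r ≥ 1
  have hn1 : 1 ≤ n := le_trans (by omega) hkr
  have hN : (0:ℝ) < n := by exact_mod_cast hn1
  have hNne : (n:ℝ) ≠ 0 := ne_of_gt hN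
  have hk_le : k ≤ n := by omega
  have hrnk : r ≤ n - k := by omega
  have hsub1 : n - k - r = n - (k + r) := by omega
  have hfacne : ∀ s : ℕ, ((s.factorial : ℝ)) ≠ 0 :=
    fun s => Nat.cast_ne_zero.mpr (Nat.factorial_ne_zero s)
  set g := iteratedDeriv r f with hgdef
  obtain ⟨hsup1, hsup0⟩ := supNorm_spec g hg
  have hδ0 : (0:ℝ) ≤ ((k:ℝ) + (r:ℝ))/(n:ℝ) := by positivity
  obtain ⟨hmod1, hmod0⟩ := modCont_spec g hg _ hδ0
  -- F = k-th antiderivative of f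
  set F := antider^[k] f with hFdef
  have hFsm : ContDiff ℝ ((k + r : ℕ)) F := contDiff_antider_iterate k r f hf
  have hgF : iteratedDeriv (k + r) F = g := iteratedDeriv_antider_iterate k r f hf
  have hxi : ∀ j : ℕ, ∃ ξ ∈ Set.Icc ((j:ℝ)/(n:ℝ)) ((j:ℝ)/(n:ℝ) + ((k+r : ℕ):ℝ) * (1/(n:ℝ))),
      (fdiff (1/(n:ℝ)))^[k+r] F ((j:ℝ)/(n:ℝ)) = (1/(n:ℝ))^(k+r) * iteratedDeriv (k+r) F ξ :=
    fun j => fdiff_iter_mvt (k+r) F hFsm (1/(n:ℝ)) (Or.inl (by positivity)) _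
  choose ξ hξmem hξeq using hxi
  -- G = k-th antiderivative of g
  set G := antider^[k] g with hGdef
  have hg0 : ContDiff ℝ ((0:ℕ) : WithTop ℕ∞) g := by
    exact_mod_cast contDiff_zero.mpr hg
  have hGsm : ContDiff ℝ ((k:ℕ)) G := by
    have := contDiff_antider_iterate k 0 g hg0
    simpa using this
  have hGk : iteratedDeriv k G = g := by
    have := iteratedDeriv_antider_iterate k 0 g hg0
    simpa using this
  have hcond : (0 < 1/((n - r : ℕ):ℝ) ∨ k = 0) := by
    rcases Nat.eq_zero_or_pos (n - r) with h0 | hpos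
    · right; omega
    · left
      have : (0:ℝ) < ((n-r:ℕ):ℝ) := by exact_mod_cast hpos
      positivity
  have heta : ∀ j : ℕ, ∃ η ∈ Set.Icc ((j:ℝ)/((n-r:ℕ):ℝ))
      ((j:ℝ)/((n-r:ℕ):ℝ) + ((k:ℕ):ℝ) * (1/((n-r:ℕ):ℝ))),
      (fdiff (1/((n-r:ℕ):ℝ)))^[k] G ((j:ℝ)/((n-r:ℕ):ℝ))
        = (1/((n-r:ℕ):ℝ))^k * iteratedDeriv k G η :=
    fun j => fdiff_iter_mvt k G hGsm (1/((n-r:ℕ):ℝ)) hcond _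
  choose η hηmem hηeq using heta
  -- the constant cc
  set cc : ℝ := (((n-k).factorial : ℝ)) / ((((n - (k+r)).factorial : ℝ)) * (n:ℝ)^r) with hccdef
  -- Step A : representation of the iterated derivative of Qop n k f
  have hQrep : Qop n k f = fun y => ∑ j ∈ Finset.range (n - k + 1), bern (n-k) j y *
      ((((n : ℝ) ^ k * ((n - k).factorial : ℝ) / (n.factorial : ℝ)) *
        ((n.factorial : ℝ) / ((n - k).factorial : ℝ))) *
          Dseq^[k] (fun j : ℕ => F ((j:ℝ)/(n:ℝ))) j) := by
    funext y
    have hbo : bernsteinOp n F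
        = fun y => ∑ j ∈ Finset.range (n + 1), bern n j y * (fun j : ℕ => F ((j:ℝ)/(n:ℝ))) j := rfl
    show ((n : ℝ) ^ k * ((n - k).factorial : ℝ) / (n.factorial : ℝ)) *
        iteratedDeriv k (bernsteinOp n F) y
      = ∑ j ∈ Finset.range (n - k + 1), bern (n-k) j y *
          ((((n : ℝ) ^ k * ((n - k).factorial : ℝ) / (n.factorial : ℝ)) *
            ((n.factorial : ℝ) / ((n - k).factorial : ℝ))) *
              Dseq^[k] (fun j : ℕ => F ((j:ℝ)/(n:ℝ))) j)
    rw [hbo, iteratedDeriv_bern_sum k n hk_le _ y, Finset.mul_sum, Finset.mul_sum]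
    apply Finset.sum_congr rfl
    intro j _
    ring
  have hconst : (((n-k).factorial:ℝ)/(((n-(k+r)).factorial):ℝ)) *
      ((((n : ℝ) ^ k * ((n - k).factorial : ℝ) / (n.factorial : ℝ)) *
        ((n.factorial : ℝ) / ((n - k).factorial : ℝ))) * (1/(n:ℝ))^(k+r)) = cc := by
    rw [hccdef]
    have h1 := hfacne (n-k); have h2 := hfacne n; have h3 := hfacne (n-(k+r))
    field_simp
    have e : (n:ℝ)^k * (1/(n:ℝ))^(k+r) * (n:ℝ)^r = ((n:ℝ) * (1/(n:ℝ)))^k * ((n:ℝ)*(1/(n:ℝ)))^r := by ring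
    rw [e, mul_one_div_cancel hNne]; simp
  have hA : iteratedDeriv r (Qop n k f) x
      = ∑ j ∈ Finset.range (n - (k+r) + 1), bern (n - (k+r)) j x * (cc * g (ξ j)) := by
    rw [hQrep, iteratedDeriv_bern_sum r (n-k) hrnk _ x,
      Dseq_iter_const_mul r _ (Dseq^[k] (fun j : ℕ => F ((j:ℝ)/(n:ℝ))))]
    have hDm : Dseq^[r] (Dseq^[k] (fun j : ℕ => F ((j:ℝ)/(n:ℝ))))
        = Dseq^[k + r] (fun j : ℕ => F ((j:ℝ)/(n:ℝ))) := by
      rw [← Function.iterate_add_apply, add_comm]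
    rw [hsub1, hDm, Dseq_iter_eq_fdiff n F (k+r), Finset.mul_sum]
    apply Finset.sum_congr rfl
    intro j hj
    simp only []
    rw [hξeq j]
    have hgFpt : iteratedDeriv (k+r) F (ξ j) = g (ξ j) := by rw [hgF]
    rw [hgFpt]
    linear_combination (bern (n - (k+r)) j x * g (ξ j)) * hconst
  -- Step B : representation of Qop (n-r) k g at x
  have hn'k : k ≤ n - r := by omega
  have hsub2 : n - r - k = n - (k + r) := by omega
  have hone : ((((n-r:ℕ)):ℝ)^k * (((n - r - k).factorial):ℝ)/(((n-r).factorial):ℝ)) *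
      ((((n-r).factorial):ℝ)/((((n - r - k)).factorial):ℝ)) * (1/((n-r:ℕ):ℝ))^k = 1 := by
    rcases Nat.eq_zero_or_pos (n - r) with h0 | hpos
    · have hk0 : k = 0 := by omega
      subst hk0
      rw [h0]
      norm_num
    · have hne : ((n-r:ℕ):ℝ) ≠ 0 := by
        have : (0:ℝ) < ((n-r:ℕ):ℝ) := by exact_mod_cast hpos
        exact ne_of_gt this
      field_simp
      rw [← mul_pow, mul_one_div_cancel hne, one_pow]
  have hQ2 : Qop (n - r) k g x
      = ∑ j ∈ Finset.range (n - (k+r) + 1), bern (n - (k+r)) j x * g (η j) := by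
    have hbo : bernsteinOp (n-r) G = fun y => ∑ j ∈ Finset.range ((n-r) + 1),
        bern (n-r) j y * (fun j : ℕ => G ((j:ℝ)/((n-r:ℕ):ℝ))) j := rfl
    show (((n-r : ℕ) : ℝ) ^ k * (((n-r) - k).factorial : ℝ) / ((n-r).factorial : ℝ)) *
        iteratedDeriv k (bernsteinOp (n-r) G) x
      = ∑ j ∈ Finset.range (n - (k+r) + 1), bern (n - (k+r)) j x * g (η j)
    rw [hbo, iteratedDeriv_bern_sum k (n-r) hn'k _ x, Dseq_iter_eq_fdiff (n-r) G k,
      Finset.mul_sum, Finset.mul_sum]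
    rw [hsub2]
    apply Finset.sum_congr rfl
    intro j hj
    simp only []
    rw [hηeq j]
    have hGkpt : iteratedDeriv k G (η j) = g (η j) := by rw [hGk]
    rw [hGkpt]
    have hone' := hone
    rw [hsub2] at hone'
    linear_combination (bern (n - (k+r)) j x * g (η j)) * hone'
  -- geometric facts about the nodes
  have hdist : ∀ j ∈ Finset.range (n - (k+r) + 1),
      ξ j ∈ Set.Icc (0:ℝ) 1 ∧ η j ∈ Set.Icc (0:ℝ) 1
        ∧ |ξ j - η j| ≤ ((k:ℝ)+(r:ℝ))/(n:ℝ) := by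
    intro j hj
    have hjn : j ≤ n - (k+r) := by
      have := Finset.mem_range.mp hj; omega
    have hjle : (j:ℝ) ≤ (n:ℝ) - (k:ℝ) - (r:ℝ) := by
      have h1 : ((j:ℕ):ℝ) ≤ ((n - (k+r):ℕ):ℝ) := by exact_mod_cast hjn
      rw [Nat.cast_sub hkr] at h1
      push_cast at h1
      linarith
    have hknn : (0:ℝ) ≤ k := Nat.cast_nonneg k
    have hrnn : (0:ℝ) ≤ r := Nat.cast_nonneg r
    have hr1 : (1:ℝ) ≤ r := by exact_mod_cast hrpos
    have hjnn : (0:ℝ) ≤ j := Nat.cast_nonneg j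
    obtain ⟨hξ1, hξ2⟩ := hξmem j
    obtain ⟨hη1, hη2⟩ := hηmem j
    push_cast at hξ1 hξ2 hη1 hη2
    rcases Nat.eq_zero_or_pos (n - r) with h0 | hpos
    · -- degenerate case : n = r, k = 0, j = 0
      have hk0 : k = 0 := by omega
      have hnr : n = r := by omega
      have hj0 : j = 0 := by omega
      have hk0' : (k:ℝ) = 0 := by exact_mod_cast hk0
      have hj0' : (j:ℝ) = 0 := by exact_mod_cast hj0
      have hrn : (r:ℝ) = (n:ℝ) := by exact_mod_cast hnr.symm
      have hnr0 : ((n - r : ℕ):ℝ) = 0 := by rw [h0]; simp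
      have hδ1 : ((k:ℝ)+(r:ℝ))/(n:ℝ) = 1 := by
        rw [hk0', hrn, zero_add, div_self hNne]
      simp only [hj0', hk0'] at hξ1 hξ2 hη1 hη2
      rw [hnr0] at hη1 hη2
      simp only [zero_div, zero_add, zero_mul, add_zero, div_zero, mul_zero] at hξ1 hξ2 hη1 hη2
      have hηeq0 : η j = 0 := le_antisymm hη2 hη1
      have hξle1 : ξ j ≤ 1 := by
        calc ξ j ≤ (r:ℝ) * (1/(n:ℝ)) := hξ2
          _ = 1 := by rw [hrn]; field_simp
      refine ⟨⟨hξ1, hξle1⟩, ⟨by rw [hηeq0], by rw [hηeq0]; norm_num⟩, ?_⟩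
      rw [hηeq0, sub_zero, abs_of_nonneg hξ1, hδ1]
      exact hξle1
    · -- nondegenerate case
      have hn'pos : (0:ℝ) < ((n - r:ℕ):ℝ) := by exact_mod_cast hpos
      have hcast : ((n - r:ℕ):ℝ) = (n:ℝ) - (r:ℝ) := by
        rw [Nat.cast_sub (by omega)]
      rw [hcast] at hη1 hη2 hn'pos
      have hn'ne : (n:ℝ) - (r:ℝ) ≠ 0 := ne_of_gt hn'pos
      refine ⟨⟨?_, ?_⟩, ⟨?_, ?_⟩, ?_⟩
      · have : (0:ℝ) ≤ (j:ℝ)/(n:ℝ) := by positivity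
        linarith
      · have h2 : (j:ℝ)/(n:ℝ) + ((k:ℝ)+(r:ℝ)) * (1/(n:ℝ)) = ((j:ℝ) + ((k:ℝ)+(r:ℝ)))/(n:ℝ) := by
          ring
        rw [h2] at hξ2
        have h3 : ((j:ℝ) + ((k:ℝ)+(r:ℝ)))/(n:ℝ) ≤ 1 := by
          rw [div_le_one hN]; linarith
        linarith
      · have : (0:ℝ) ≤ (j:ℝ)/((n:ℝ)-(r:ℝ)) := by positivity
        linarith
      · have h2 : (j:ℝ)/((n:ℝ)-(r:ℝ)) + (k:ℝ) * (1/((n:ℝ)-(r:ℝ)))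
            = ((j:ℝ) + (k:ℝ))/((n:ℝ)-(r:ℝ)) := by ring
        rw [h2] at hη2
        have h3 : ((j:ℝ) + (k:ℝ))/((n:ℝ)-(r:ℝ)) ≤ 1 := by
          rw [div_le_one hn'pos]; linarith
        linarith
      · rw [abs_sub_le_iff]
        constructor
        · have hlow : (j:ℝ)/(n:ℝ) ≤ (j:ℝ)/((n:ℝ)-(r:ℝ)) := by
            rw [div_le_div_iff₀ hN hn'pos]; nlinarith
          have heq1 : ((k:ℝ)+(r:ℝ)) * (1/(n:ℝ)) = ((k:ℝ)+(r:ℝ))/(n:ℝ) := by ring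
          linarith [hξ2, hη1, hlow]
        · have h5 : (j:ℝ)*(r:ℝ) + (k:ℝ)*(n:ℝ) ≤ ((k:ℝ)+(r:ℝ))*((n:ℝ)-(r:ℝ)) := by
            nlinarith [mul_nonneg hrnn (sub_nonneg.mpr hjle)]
          have hkey : ((j:ℝ) + (k:ℝ))/((n:ℝ)-(r:ℝ)) - (j:ℝ)/(n:ℝ) ≤ ((k:ℝ)+(r:ℝ))/(n:ℝ) := by
            rw [div_sub_div _ _ hn'ne hNne, div_le_div_iff₀ (mul_pos hn'pos hN) hN]
            nlinarith [mul_le_mul_of_nonneg_right h5 hN.le]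
          have h2 : (j:ℝ)/((n:ℝ)-(r:ℝ)) + (k:ℝ) * (1/((n:ℝ)-(r:ℝ)))
              = ((j:ℝ)+(k:ℝ))/((n:ℝ)-(r:ℝ)) := by ring
          linarith [hη2, hξ1, hkey]
  -- bounds on cc
  have hccprod : cc = ∏ i ∈ Finset.range r, ((((n - (k+r):ℕ)):ℝ) + (i:ℝ) + 1)/(n:ℝ) := by
    have hfr := fact_ratio (n - (k+r)) r
    have hnk : n - (k+r) + r = n - k := by omega
    rw [hnk] at hfr
    have hpd : ∏ i ∈ Finset.range r, ((((n - (k+r):ℕ)):ℝ) + (i:ℝ) + 1)/(n:ℝ)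
        = (∏ i ∈ Finset.range r, ((((n - (k+r):ℕ)):ℝ) + (i:ℝ) + 1)) / (n:ℝ)^r := by
      rw [Finset.prod_div_distrib, Finset.prod_const, Finset.card_range]
    rw [hccdef, hfr, hpd, mul_div_mul_left _ _ (hfacne _)]
  have hcastnm : ((n - (k+r):ℕ):ℝ) = (n:ℝ) - ((k:ℝ)+(r:ℝ)) := by
    rw [Nat.cast_sub hkr]; push_cast; ring
  have hfac01 : ∀ i ∈ Finset.range r,
      0 ≤ ((((n - (k+r):ℕ)):ℝ) + (i:ℝ) + 1)/(n:ℝ)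
        ∧ ((((n - (k+r):ℕ)):ℝ) + (i:ℝ) + 1)/(n:ℝ) ≤ 1 := by
    intro i hi
    have hir : (i:ℝ) ≤ (r:ℝ) - 1 := by
      have : i + 1 ≤ r := Finset.mem_range.mp hi
      have : ((i+1:ℕ):ℝ) ≤ (r:ℝ) := by exact_mod_cast this
      push_cast at this; linarith
    have hknn : (0:ℝ) ≤ k := Nat.cast_nonneg k
    constructor
    · apply div_nonneg _ hN.le
      rw [hcastnm]
      have hkr' : (k:ℝ) + (r:ℝ) ≤ (n:ℝ) := by exact_mod_cast hkr
      have : (0:ℝ) ≤ (i:ℝ) := Nat.cast_nonneg i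
      linarith
    · rw [div_le_one hN, hcastnm]
      linarith
  have hcc0 : 0 ≤ cc := by
    rw [hccprod]
    exact Finset.prod_nonneg (fun i hi => (hfac01 i hi).1)
  have hcc1 : cc ≤ 1 := by
    rw [hccprod]
    exact Finset.prod_le_one (fun i hi => (hfac01 i hi).1) (fun i hi => (hfac01 i hi).2)
  have h1c : 1 - cc ≤ (2 * (k : ℝ) + (r : ℝ) - 1) * (r : ℝ) / (2 * (n : ℝ)) := by
    rw [hccprod]
    have hle := one_sub_prod_le (Finset.range r)
      (fun i => ((((n - (k+r):ℕ)):ℝ) + (i:ℝ) + 1)/(n:ℝ))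
      (fun i hi => (hfac01 i hi).1) (fun i hi => (hfac01 i hi).2)
    have hsumval : ∑ i ∈ Finset.range r, (1 - ((((n - (k+r):ℕ)):ℝ) + (i:ℝ) + 1)/(n:ℝ))
        = (2 * (k : ℝ) + (r : ℝ) - 1) * (r : ℝ) / (2 * (n : ℝ)) := by
      have hterm : ∀ i ∈ Finset.range r,
          (1 - ((((n - (k+r):ℕ)):ℝ) + (i:ℝ) + 1)/(n:ℝ))
            = ((k:ℝ)+(r:ℝ)-1)/(n:ℝ) - (i:ℝ)/(n:ℝ) := by
        intro i _
        rw [hcastnm]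
        field_simp
        ring
      rw [Finset.sum_congr rfl hterm, Finset.sum_sub_distrib, Finset.sum_const,
        Finset.card_range, ← Finset.sum_div, sum_range_cast]
      field_simp
      linear_combination (2*(k:ℝ)*r - 2*r + 2*(r:ℝ)^2) * (mul_inv_cancel₀ hNne)
    linarith [hle, le_of_eq hsumval]
  have hT1nn : 0 ≤ (2 * (k : ℝ) + (r : ℝ) - 1) * (r : ℝ) / (2 * (n : ℝ)) := by
    apply div_nonneg
    · have hr1 : (1:ℝ) ≤ r := by exact_mod_cast hrpos
      have hknn : (0:ℝ) ≤ k := Nat.cast_nonneg k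
      nlinarith
    · linarith
  -- per-node estimate
  have key : ∀ j ∈ Finset.range (n - (k+r) + 1),
      |cc * g (ξ j) - g (η j)| ≤
        (2 * (k : ℝ) + (r : ℝ) - 1) * (r : ℝ) / (2 * (n : ℝ)) * supNorm g
          + modCont g (((k : ℝ) + (r : ℝ)) / (n : ℝ)) := by
    intro j hj
    obtain ⟨hξI, hηI, hd⟩ := hdist j hj
    have e1 : cc * g (ξ j) - g (η j) = (cc - 1) * g (ξ j) + (g (ξ j) - g (η j)) := by ring
    rw [e1]
    calc |(cc - 1) * g (ξ j) + (g (ξ j) - g (η j))|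
        ≤ |(cc - 1) * g (ξ j)| + |g (ξ j) - g (η j)| := abs_add_le _ _
      _ = (1 - cc) * |g (ξ j)| + |g (ξ j) - g (η j)| := by
          rw [abs_mul, abs_sub_comm cc 1, abs_of_nonneg (by linarith : (0:ℝ) ≤ 1 - cc)]
      _ ≤ (2 * (k : ℝ) + (r : ℝ) - 1) * (r : ℝ) / (2 * (n : ℝ)) * supNorm g
          + modCont g (((k : ℝ) + (r : ℝ)) / (n : ℝ)) := by
          have b1 : (1 - cc) * |g (ξ j)| ≤
              (2 * (k : ℝ) + (r : ℝ) - 1) * (r : ℝ) / (2 * (n : ℝ)) * supNorm g :=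
            mul_le_mul h1c (hsup1 _ hξI) (abs_nonneg _) hT1nn
          have b2 : |g (ξ j) - g (η j)| ≤ modCont g (((k : ℝ) + (r : ℝ)) / (n : ℝ)) :=
            hmod1 _ hξI _ hηI hd
          linarith
  -- final assembly
  rw [hA, hQ2, ← Finset.sum_sub_distrib]
  have hterm : ∀ j ∈ Finset.range (n - (k+r) + 1),
      bern (n - (k+r)) j x * (cc * g (ξ j)) - bern (n - (k+r)) j x * g (η j)
        = bern (n - (k+r)) j x * (cc * g (ξ j) - g (η j)) := fun j _ => by ring
  rw [Finset.sum_congr rfl hterm]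
  calc |∑ j ∈ Finset.range (n - (k+r) + 1), bern (n - (k+r)) j x * (cc * g (ξ j) - g (η j))|
      ≤ ∑ j ∈ Finset.range (n - (k+r) + 1), |bern (n - (k+r)) j x * (cc * g (ξ j) - g (η j))| :=
        Finset.abs_sum_le_sum_abs _ _
    _ ≤ ∑ j ∈ Finset.range (n - (k+r) + 1), bern (n - (k+r)) j x *
          ((2 * (k : ℝ) + (r : ℝ) - 1) * (r : ℝ) / (2 * (n : ℝ)) * supNorm g
            + modCont g (((k : ℝ) + (r : ℝ)) / (n : ℝ))) := by
        apply Finset.sum_le_sum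
        intro j hj
        rw [abs_mul, abs_of_nonneg (bern_nonneg _ _ hx)]
        exact mul_le_mul_of_nonneg_left (key j hj) (bern_nonneg _ _ hx)
    _ = (2 * (k : ℝ) + (r : ℝ) - 1) * (r : ℝ) / (2 * (n : ℝ)) * supNorm g
          + modCont g (((k : ℝ) + (r : ℝ)) / (n : ℝ)) := by
        rw [← Finset.sum_mul, bern_sum_one, one_mul]
end

section
/- Let α, β > −1 be reals, let n, r be integers with 0 ≤ r ≤ n, and let f : [0,1] → ℝ be r times continuously differentiable. Then ‖ (M_n^{(α,β)} f)^{(r)} ‖ ≤ (Γ(n+1)Γ(n+α+β+2)/(Γ(n−r+1)Γ(n+α+β+r+2))) · ‖f^{(r)}‖. -/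
/-- Durrmeyer operator with Jacobi weight `t^α (1-t)^β`:
`M_n^{(α,β)}(f;x) = Σ_{k=0}^n p_{n,k}(x) (1/c_{n,k}^{(α,β)}) ∫₀¹ p_{n,k}(t) t^α (1-t)^β f(t) dt`. -/
noncomputable def durrmeyerJ (α β : ℝ) (n : ℕ) (f : ℝ → ℝ) (x : ℝ) : ℝ :=
  ∑ k ∈ Finset.range (n + 1), bern n k x *
    ((∫ t in (0:ℝ)..1, bern n k t * t ^ α * (1 - t) ^ β * f t) /
      (∫ t in (0:ℝ)..1, bern n k t * t ^ α * (1 - t) ^ β))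

open Set MeasureTheory intervalIntegral Finset

/-- a.e. congruence helper: equality on the open interval suffices. -/
lemma integral_congr_Ioo {f g : ℝ → ℝ} (h : ∀ t ∈ Set.Ioo (0:ℝ) 1, f t = g t) :
    ∫ t in (0:ℝ)..1, f t = ∫ t in (0:ℝ)..1, g t := by
  apply intervalIntegral.integral_congr_ae
  have h1 : ∀ᵐ (t : ℝ), t ≠ 1 := by
    refine (MeasureTheory.compl_mem_ae_iff).2 ?_
    exact measure_singleton (1:ℝ)
  filter_upwards [h1] with t ht1 htm
  rw [Set.uIoc_of_le (by norm_num : (0:ℝ) ≤ 1)] at htm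
  exact h t ⟨htm.1, lt_of_le_of_ne htm.2 ht1⟩

lemma intervalIntegrable_congr_Ioo {f g : ℝ → ℝ}
    (h : ∀ t ∈ Set.Ioo (0:ℝ) 1, f t = g t)
    (hf : IntervalIntegrable f volume 0 1) : IntervalIntegrable g volume 0 1 := by
  rw [intervalIntegrable_iff_integrableOn_Ioo_of_le (by norm_num : (0:ℝ) ≤ 1)] at hf ⊢
  exact hf.congr_fun h measurableSet_Ioo

/-- Integrability of the Jacobi weight. -/
lemma intW (a b : ℝ) (ha : -1 < a) (hb : -1 < b) :
    IntervalIntegrable (fun t : ℝ => t ^ a * (1 - t) ^ b) volume 0 1 := by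
  have h := Complex.betaIntegral_convergent (u := (a:ℂ) + 1) (v := (b:ℂ) + 1)
    (by simp; linarith) (by simp; linarith)
  have h2 : IntervalIntegrable (fun t : ℝ =>
      ((t:ℂ) ^ ((a:ℂ) + 1 - 1) * (1 - (t:ℂ)) ^ ((b:ℂ) + 1 - 1)).re) volume 0 1 := by
    rw [intervalIntegrable_iff_integrableOn_Ioo_of_le (by norm_num : (0:ℝ) ≤ 1)]
    rw [intervalIntegrable_iff_integrableOn_Ioo_of_le (by norm_num : (0:ℝ) ≤ 1)] at h
    exact h.re
  apply intervalIntegrable_congr_Ioo _ h2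
  intro t ht
  have h1 : ((t:ℝ) ^ a : ℝ) = ((t:ℂ) ^ ((a:ℂ) + 1 - 1)).re := by
    rw [add_sub_cancel_right, ← Complex.ofReal_cpow ht.1.le]
    simp
  have h2 : ((1 - t:ℝ) ^ b : ℝ) = ((1 - (t:ℂ)) ^ ((b:ℂ) + 1 - 1)).re := by
    rw [add_sub_cancel_right]
    rw [show (1 - (t:ℂ)) = ((1 - t : ℝ) : ℂ) by push_cast; ring]
    rw [← Complex.ofReal_cpow (by linarith [ht.2] : (0:ℝ) ≤ 1 - t)]
    simp
  have h3 : ((t:ℂ) ^ ((a:ℂ) + 1 - 1) * (1 - (t:ℂ)) ^ ((b:ℂ) + 1 - 1)).re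
      = t ^ a * (1 - t) ^ b := by
    rw [add_sub_cancel_right, add_sub_cancel_right,
      ← Complex.ofReal_cpow ht.1.le,
      show (1 - (t:ℂ)) = ((1 - t : ℝ) : ℂ) by push_cast; ring,
      ← Complex.ofReal_cpow (by linarith [ht.2] : (0:ℝ) ≤ 1 - t)]
    rw [← Complex.ofReal_mul]
    simp
  rw [h3]


lemma contOn_W (a b : ℝ) :
    ContinuousOn (fun t : ℝ => t ^ a * (1 - t) ^ b) (Set.Ioo 0 1) := by
  apply ContinuousOn.mul
  · intro t ht
    exact ((Real.continuousAt_rpow_const t a (Or.inl (ne_of_gt ht.1)))).continuousWithinAt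
  · intro t ht
    have : ContinuousAt (fun t : ℝ => (1 - t) ^ b) t := by
      have h1 : ContinuousAt (fun t : ℝ => (1:ℝ) - t) t := by fun_prop
      exact (Real.continuousAt_rpow_const (1 - t) b
        (Or.inl (by intro h; have := ht.2; linarith [sub_eq_zero.mp h]))).comp h1
    exact this.continuousWithinAt

/-- Integrability of weight times a continuous function. -/
lemma intWg (a b : ℝ) (ha : -1 < a) (hb : -1 < b) {g : ℝ → ℝ} (hg : Continuous g) :
    IntervalIntegrable (fun t : ℝ => t ^ a * (1 - t) ^ b * g t) volume 0 1 := by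
  obtain ⟨M, hM⟩ := isCompact_Icc.exists_bound_of_continuousOn
    (hg.continuousOn : ContinuousOn g (Set.Icc (0:ℝ) 1))
  have hM0 : 0 ≤ M := le_trans (norm_nonneg (g 0)) (hM 0 (by norm_num))
  rw [intervalIntegrable_iff_integrableOn_Ioo_of_le (by norm_num : (0:ℝ) ≤ 1)]
  have hWint : IntegrableOn (fun t : ℝ => t ^ a * (1 - t) ^ b * M) (Set.Ioo 0 1) volume := by
    have := (intW a b ha hb)
    rw [intervalIntegrable_iff_integrableOn_Ioo_of_le (by norm_num : (0:ℝ) ≤ 1)] at this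
    exact this.mul_const M
  apply Integrable.mono hWint
  · exact ((contOn_W a b).mul hg.continuousOn).aestronglyMeasurable measurableSet_Ioo
  · filter_upwards [ae_restrict_mem measurableSet_Ioo] with t ht
    have h0t : (0:ℝ) ≤ t := ht.1.le
    have h1t : (0:ℝ) ≤ 1 - t := by linarith [ht.2]
    have hw : 0 ≤ t ^ a * (1 - t) ^ b :=
      mul_nonneg (Real.rpow_nonneg h0t a) (Real.rpow_nonneg h1t b)
    have : ‖t ^ a * (1 - t) ^ b * g t‖ = t ^ a * (1 - t) ^ b * |g t| := by
      rw [norm_mul, Real.norm_eq_abs, Real.norm_eq_abs, abs_of_nonneg hw]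
    rw [this, Real.norm_eq_abs, abs_of_nonneg (mul_nonneg hw hM0)]
    have hgM : |g t| ≤ M := by
      have := hM t (Set.mem_Icc.mpr ⟨h0t, ht.2.le⟩)
      simpa using this
    exact mul_le_mul_of_nonneg_left hgM hw


lemma bern_continuous (n k : ℕ) : Continuous (bern n k) := by
  unfold bern; fun_prop

lemma bern_nonneg_s14 {n k : ℕ} {t : ℝ} (h0 : 0 ≤ t) (h1 : t ≤ 1) : 0 ≤ bern n k t := by
  unfold bern
  have : (0:ℝ) ≤ 1 - t := by linarith
  positivity

lemma bern_pos {n k : ℕ} (hk : k ≤ n) {t : ℝ} (h0 : 0 < t) (h1 : t < 1) : 0 < bern n k t := by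
  unfold bern
  have h2 : (0:ℝ) < 1 - t := by linarith
  have h3 : 0 < n.choose k := Nat.choose_pos hk
  positivity

lemma intBern (a b : ℝ) (ha : -1 < a) (hb : -1 < b) (n k : ℕ) {f : ℝ → ℝ} (hf : Continuous f) :
    IntervalIntegrable (fun t : ℝ => bern n k t * t ^ a * (1 - t) ^ b * f t) volume 0 1 := by
  have h : (fun t : ℝ => bern n k t * t ^ a * (1 - t) ^ b * f t)
      = fun t : ℝ => t ^ a * (1 - t) ^ b * (bern n k t * f t) := by funext t; ring
  rw [h]
  exact intWg a b ha hb ((bern_continuous n k).mul hf)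

lemma intBernW (a b : ℝ) (ha : -1 < a) (hb : -1 < b) (n k : ℕ) :
    IntervalIntegrable (fun t : ℝ => bern n k t * t ^ a * (1 - t) ^ b) volume 0 1 := by
  have h := intBern a b ha hb n k (f := fun _ => (1:ℝ)) continuous_const
  simpa using h

lemma c_pos (a b : ℝ) (ha : -1 < a) (hb : -1 < b) {n k : ℕ} (hk : k ≤ n) :
    0 < ∫ t in (0:ℝ)..1, bern n k t * t ^ a * (1 - t) ^ b := by
  apply intervalIntegral_pos_of_pos_on (intBernW a b ha hb n k)
  · intro t ht
    have h1 : (0:ℝ) < 1 - t := by linarith [ht.2]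
    exact mul_pos (mul_pos (bern_pos hk ht.1 ht.2) (Real.rpow_pos_of_pos ht.1 a))
      (Real.rpow_pos_of_pos h1 b)
  · norm_num

lemma supNorm_le {g : ℝ → ℝ} (hg : Continuous g) {t : ℝ} (ht : t ∈ Set.Icc (0:ℝ) 1) :
    |g t| ≤ supNorm g := by
  obtain ⟨M, hM⟩ := isCompact_Icc.exists_bound_of_continuousOn
    (hg.continuousOn : ContinuousOn g (Set.Icc (0:ℝ) 1))
  have hbdd : BddAbove (Set.range fun x : Set.Icc (0:ℝ) 1 => |g x|) := by
    refine ⟨M, ?_⟩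
    rintro y ⟨x, rfl⟩
    simpa using hM x x.2
  exact le_ciSup hbdd ⟨t, ht⟩

lemma supNorm_nonneg {g : ℝ → ℝ} (hg : Continuous g) : 0 ≤ supNorm g :=
  le_trans (abs_nonneg (g 0)) (supNorm_le hg (by norm_num))

lemma coef_bound (a b : ℝ) (ha : -1 < a) (hb : -1 < b) {n k : ℕ} (hk : k ≤ n)
    {g : ℝ → ℝ} (hg : Continuous g) :
    |(∫ t in (0:ℝ)..1, bern n k t * t ^ a * (1 - t) ^ b * g t) /
      (∫ t in (0:ℝ)..1, bern n k t * t ^ a * (1 - t) ^ b)| ≤ supNorm g := by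
  set c := ∫ t in (0:ℝ)..1, bern n k t * t ^ a * (1 - t) ^ b with hc_def
  have hc : 0 < c := c_pos a b ha hb hk
  set M := supNorm g with hM_def
  have hM0 : 0 ≤ M := supNorm_nonneg hg
  have hI : |∫ t in (0:ℝ)..1, bern n k t * t ^ a * (1 - t) ^ b * g t| ≤ c * M := by
    refine le_trans (intervalIntegral.abs_integral_le_integral_abs (by norm_num)) ?_
    have h2 : ∫ t in (0:ℝ)..1, |bern n k t * t ^ a * (1 - t) ^ b * g t|
        ≤ ∫ t in (0:ℝ)..1, bern n k t * t ^ a * (1 - t) ^ b * M := by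
      apply intervalIntegral.integral_mono_on (by norm_num)
        (intBern a b ha hb n k hg).abs
        (intBern a b ha hb n k (f := fun _ => M) continuous_const)
      intro t ht
      have hw : 0 ≤ bern n k t * t ^ a * (1 - t) ^ b :=
        mul_nonneg (mul_nonneg (bern_nonneg_s14 ht.1 ht.2) (Real.rpow_nonneg ht.1 a))
          (Real.rpow_nonneg (by linarith [ht.2] : (0:ℝ) ≤ 1 - t) b)
      rw [abs_mul, abs_of_nonneg hw]
      exact mul_le_mul_of_nonneg_left (supNorm_le hg ht) hw
    refine h2.trans ?_
    rw [intervalIntegral.integral_mul_const]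
  rw [abs_div, abs_of_pos hc, div_le_iff₀ hc]
  linarith [hI]

lemma sum_bern (n : ℕ) (x : ℝ) : ∑ k ∈ Finset.range (n + 1), bern n k x = 1 := by
  have h := add_pow x (1 - x) n
  simp only [add_sub_cancel, one_pow] at h
  rw [show ((1:ℝ) = (x + (1-x))^n) by rw [show x + (1-x) = (1:ℝ) by ring, one_pow]]
  rw [add_pow]
  apply Finset.sum_congr rfl
  intro k _
  unfold bern; ring

lemma durr_bound (a b : ℝ) (ha : -1 < a) (hb : -1 < b) (n : ℕ)
    {g : ℝ → ℝ} (hg : Continuous g) {x : ℝ} (hx : x ∈ Set.Icc (0:ℝ) 1) :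
    |durrmeyerJ a b n g x| ≤ supNorm g := by
  unfold durrmeyerJ
  refine le_trans (Finset.abs_sum_le_sum_abs _ _) ?_
  have h1 : ∀ k ∈ Finset.range (n + 1),
      |bern n k x * ((∫ t in (0:ℝ)..1, bern n k t * t ^ a * (1 - t) ^ b * g t) /
        (∫ t in (0:ℝ)..1, bern n k t * t ^ a * (1 - t) ^ b))| ≤ bern n k x * supNorm g := by
    intro k hk
    rw [abs_mul, abs_of_nonneg (bern_nonneg_s14 hx.1 hx.2)]
    exact mul_le_mul_of_nonneg_left
      (coef_bound a b ha hb (Nat.lt_succ_iff.mp (Finset.mem_range.mp hk)) hg)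
      (bern_nonneg_s14 hx.1 hx.2)
  refine le_trans (Finset.sum_le_sum h1) ?_
  rw [← Finset.sum_mul, sum_bern, one_mul]


lemma rpow_split {t : ℝ} (ht : 0 < t) (i : ℕ) (c : ℝ) :
    t ^ ((i:ℝ) + c) = t ^ i * t ^ c := by
  rw [Real.rpow_add ht, Real.rpow_natCast]

/-- Core integration by parts: the integral of the derivative of
`t^u (1-t)^v f t` over `[0,1]` vanishes. -/
lemma ftc_core (u v : ℝ) (hu : 0 < u) (hv : 0 < v) (f f' : ℝ → ℝ) (hf : Continuous f)
    (hder : ∀ t ∈ Set.Ioo (0:ℝ) 1, HasDerivAt f (f' t) t)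
    (hint1 : IntervalIntegrable
      (fun t : ℝ => (u * t ^ (u-1) * (1-t) ^ v - v * t ^ u * (1-t) ^ (v-1)) * f t) volume 0 1)
    (hint2 : IntervalIntegrable (fun t : ℝ => t ^ u * (1-t) ^ v * f' t) volume 0 1) :
    (∫ t in (0:ℝ)..1, (u * t ^ (u-1) * (1-t) ^ v - v * t ^ u * (1-t) ^ (v-1)) * f t)
      + (∫ t in (0:ℝ)..1, t ^ u * (1-t) ^ v * f' t) = 0 := by
  set F : ℝ → ℝ := fun t => t ^ u * (1-t) ^ v * f t with hF
  set G : ℝ → ℝ := fun t => (u * t ^ (u-1) * (1-t) ^ v - v * t ^ u * (1-t) ^ (v-1)) * f t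
    + t ^ u * (1-t) ^ v * f' t with hG
  have hFcont : Continuous F := by
    apply Continuous.mul _ hf
    exact (Real.continuous_rpow_const hu.le).mul
      ((Real.continuous_rpow_const hv.le).comp (continuous_const.sub continuous_id))
  have hFder : ∀ t ∈ Set.Ioo (0:ℝ) 1, HasDerivAt F (G t) t := by
    intro t ht
    have h1t : (0:ℝ) < 1 - t := by linarith [ht.2]
    have h1 : HasDerivAt (fun t : ℝ => t ^ u) (u * t ^ (u-1)) t :=
      Real.hasDerivAt_rpow_const (Or.inl ht.1.ne')
    have h2 : HasDerivAt (fun t : ℝ => (1-t) ^ v) (v * (1-t) ^ (v-1) * (-1)) t := by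
      have hin : HasDerivAt (fun t : ℝ => 1 - t) (-1) t := by
        simpa using (hasDerivAt_id' t).const_sub (1:ℝ)
      exact (Real.hasDerivAt_rpow_const (p := v) (x := 1 - t) (Or.inl h1t.ne')).comp t hin
    have h3 := (h1.mul h2).mul (hder t ht)
    refine h3.congr_deriv ?_
    simp only [hG, hF, Pi.mul_apply]
    ring
  have hftc := intervalIntegral.integral_eq_sub_of_hasDeriv_right_of_le (by norm_num : (0:ℝ) ≤ 1)
    hFcont.continuousOn (fun t ht => (hFder t ht).hasDerivWithinAt) (hint1.add hint2)
  have hF1 : F 1 = 0 := by simp [hF, Real.zero_rpow hv.ne']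
  have hF0 : F 0 = 0 := by simp [hF, Real.zero_rpow hu.ne']
  rw [intervalIntegral.integral_add hint1 hint2] at hftc
  rw [hftc, hF1, hF0, sub_zero]


noncomputable def mJ (a b : ℝ) (i j : ℕ) : ℝ :=
  ∫ t in (0:ℝ)..1, t ^ i * (1-t) ^ j * (t ^ a * (1-t) ^ b)

section mlemmas
variable {a b : ℝ}

lemma m_int (ha : -1 < a) (hb : -1 < b) (i j : ℕ) :
    IntervalIntegrable (fun t : ℝ => t ^ i * (1-t) ^ j * (t ^ a * (1-t) ^ b)) volume 0 1 := by
  have h := intWg a b ha hb (g := fun t : ℝ => t ^ i * (1-t) ^ j) (by fun_prop)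
  apply intervalIntegrable_congr_Ioo _ h
  intro t _; ring

lemma m_rec (ha : -1 < a) (hb : -1 < b) (i j : ℕ) :
    ((i:ℝ)+a+1) * mJ a b i (j+1) = ((j:ℝ)+b+1) * mJ a b (i+1) j := by
  set u : ℝ := (i:ℝ)+a+1 with hu_def
  set v : ℝ := (j:ℝ)+b+1 with hv_def
  have hu : 0 < u := by have : (0:ℝ) ≤ i := Nat.cast_nonneg i; simp only [hu_def]; linarith [ha]
  have hv : 0 < v := by have : (0:ℝ) ≤ j := Nat.cast_nonneg j; simp only [hv_def]; linarith [hb]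
  have key : ∀ t ∈ Set.Ioo (0:ℝ) 1,
      (u * t ^ (u-1) * (1-t) ^ v - v * t ^ u * (1-t) ^ (v-1)) * (1:ℝ)
      = u * (t ^ i * (1-t) ^ (j+1) * (t ^ a * (1-t) ^ b))
        - v * (t ^ (i+1) * (1-t) ^ j * (t ^ a * (1-t) ^ b)) := by
    intro t ht
    have h1t : (0:ℝ) < 1 - t := by linarith [ht.2]
    have e1 : t ^ (u-1) = t ^ i * t ^ a := by
      rw [show u-1 = (i:ℝ)+a by rw [hu_def]; ring, rpow_split ht.1]
    have e2 : (1-t) ^ v = (1-t) ^ (j+1) * (1-t) ^ b := by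
      rw [show v = ((j+1:ℕ):ℝ)+b by rw [hv_def]; push_cast; ring, rpow_split h1t]
    have e3 : t ^ u = t ^ (i+1) * t ^ a := by
      rw [show u = ((i+1:ℕ):ℝ)+a by rw [hu_def]; push_cast; ring, rpow_split ht.1]
    have e4 : (1-t) ^ (v-1) = (1-t) ^ j * (1-t) ^ b := by
      rw [show v-1 = (j:ℝ)+b by rw [hv_def]; ring, rpow_split h1t]
    rw [e1, e2, e3, e4]; ring
  have hint1 : IntervalIntegrable
      (fun t : ℝ => (u * t ^ (u-1) * (1-t) ^ v - v * t ^ u * (1-t) ^ (v-1)) * (1:ℝ)) volume 0 1 := by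
    apply intervalIntegrable_congr_Ioo (f := fun t : ℝ =>
      u * (t ^ i * (1-t) ^ (j+1) * (t ^ a * (1-t) ^ b))
        - v * (t ^ (i+1) * (1-t) ^ j * (t ^ a * (1-t) ^ b)))
    · intro t ht; exact (key t ht).symm
    · exact ((m_int ha hb i (j+1)).const_mul u).sub ((m_int ha hb (i+1) j).const_mul v)
  have hint2 : IntervalIntegrable (fun t : ℝ => t ^ u * (1-t) ^ v * (0:ℝ)) volume 0 1 := by
    simp only [mul_zero]; exact intervalIntegrable_const
  have hfc := ftc_core u v hu hv (fun _ => (1:ℝ)) (fun _ => (0:ℝ)) continuous_const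
    (fun t _ => hasDerivAt_const t 1) hint1 hint2
  have h0 : (∫ t in (0:ℝ)..1, t ^ u * (1-t) ^ v * (0:ℝ)) = 0 := by simp
  rw [h0, add_zero] at hfc
  have h1 : (∫ t in (0:ℝ)..1,
      (u * t ^ (u-1) * (1-t) ^ v - v * t ^ u * (1-t) ^ (v-1)) * (1:ℝ))
      = u * mJ a b i (j+1) - v * mJ a b (i+1) j := by
    rw [integral_congr_Ioo key,
      intervalIntegral.integral_sub ((m_int ha hb i (j+1)).const_mul u)
        ((m_int ha hb (i+1) j).const_mul v),
      intervalIntegral.integral_const_mul, intervalIntegral.integral_const_mul]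
    rfl
  rw [h1] at hfc
  linarith

lemma m_split (ha : -1 < a) (hb : -1 < b) (i j : ℕ) : mJ a b i j = mJ a b (i+1) j + mJ a b i (j+1) := by
  unfold mJ
  rw [← intervalIntegral.integral_add (m_int ha hb (i+1) j) (m_int ha hb i (j+1))]
  apply intervalIntegral.integral_congr
  intro t _
  ring

lemma m_keyB (ha : -1 < a) (hb : -1 < b) (i j : ℕ) :
    ((i:ℝ)+a+1) * mJ a b i (j+1) = ((i:ℝ)+(j:ℝ)+a+b+3) * mJ a b (i+1) (j+1) := by
  have h1 := m_split ha hb i (j+1)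
  have h2 := m_rec ha hb i (j+1)
  push_cast at h2
  linear_combination ((i:ℝ)+a+1) * h1 + h2

end mlemmas


/-- choose identities over ℝ -/
lemma choose_cast1 {n k : ℕ} (hk : k ≤ n) :
    ((n:ℝ)+1) * (n.choose k : ℝ) = ((n:ℝ)+1-(k:ℝ)) * ((n+1).choose k : ℝ) := by
  have h1 := Nat.add_one_mul_choose_eq n k
  have h2 := Nat.choose_succ_right_eq (n+1) k
  have hk1 : k ≤ n + 1 := hk.trans (Nat.le_succ n)
  have h3 : ((n+1).choose k : ℝ) * ((n:ℝ)+1-(k:ℝ)) = ((n+1).choose k : ℝ) * (((n+1-k : ℕ)):ℝ) := by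
    congr 1
    rw [Nat.cast_sub hk1]; push_cast; ring
  have h4 : (n+1) * n.choose k = (n+1).choose k * (n+1-k) := by
    calc (n+1) * n.choose k = (n+1).choose (k+1) * (k+1) := by
          simpa [Nat.succ_eq_add_one] using Nat.add_one_mul_choose_eq n k
      _ = (n+1).choose k * (n+1-k) := h2
  calc ((n:ℝ)+1) * (n.choose k : ℝ) = (((n+1) * n.choose k : ℕ) : ℝ) := by push_cast; ring
    _ = (((n+1).choose k * (n+1-k) : ℕ) : ℝ) := by rw [h4]
    _ = ((n:ℝ)+1-(k:ℝ)) * ((n+1).choose k : ℝ) := by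
        rw [Nat.cast_mul, Nat.cast_sub hk1]; push_cast; ring

lemma choose_cast2 (n k : ℕ) :
    ((n:ℝ)+1) * (n.choose k : ℝ) = ((k:ℝ)+1) * ((n+1).choose (k+1) : ℝ) := by
  have h1 := Nat.add_one_mul_choose_eq n k
  calc ((n:ℝ)+1) * (n.choose k : ℝ) = ((Nat.succ n * n.choose k : ℕ) : ℝ) := by push_cast; ring
    _ = (((n+1).choose (k+1) * (k+1) : ℕ) : ℝ) := by rw [h1]
    _ = ((k:ℝ)+1) * ((n+1).choose (k+1) : ℝ) := by push_cast; ring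

/-- Main integration-by-parts identity. -/
lemma key_ibp (a b : ℝ) (ha : -1 < a) (hb : -1 < b) (n k : ℕ) (hk : k ≤ n)
    (f f' : ℝ → ℝ) (hf : Continuous f) (hf' : Continuous f')
    (hder : ∀ t, HasDerivAt f (f' t) t) :
    ((n:ℝ)+1) * (∫ t in (0:ℝ)..1, bern n k t * t ^ (a+1) * (1-t) ^ (b+1) * f' t)
    = ((k:ℝ)+1) * ((n:ℝ)+1-k+b) *
        (∫ t in (0:ℝ)..1, bern (n+1) (k+1) t * t ^ a * (1-t) ^ b * f t)
      - ((k:ℝ)+a+1) * ((n:ℝ)+1-k) *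
        (∫ t in (0:ℝ)..1, bern (n+1) k t * t ^ a * (1-t) ^ b * f t) := by
  set u : ℝ := (k:ℝ)+a+1 with hu_def
  set v : ℝ := ((n-k:ℕ):ℝ)+b+1 with hv_def
  have hcast : ((n-k:ℕ):ℝ) = (n:ℝ)-(k:ℝ) := by rw [Nat.cast_sub hk]
  have hu : 0 < u := by have : (0:ℝ) ≤ k := Nat.cast_nonneg k; simp only [hu_def]; linarith
  have hv : 0 < v := by
    have : (0:ℝ) ≤ ((n-k:ℕ):ℝ) := Nat.cast_nonneg _; simp only [hv_def]; linarith
  -- pointwise descriptions on (0,1)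
  have hpt2 : ∀ t ∈ Set.Ioo (0:ℝ) 1,
      t ^ (a+1) * (1-t) ^ (b+1) * (t ^ k * (1-t) ^ (n-k) * f' t) = t ^ u * (1-t) ^ v * f' t := by
    intro t ht
    have h1t : (0:ℝ) < 1 - t := by linarith [ht.2]
    have e3 : t ^ u = t ^ k * t ^ (a+1) := by
      rw [show u = (k:ℝ)+(a+1) by rw [hu_def]; ring, rpow_split ht.1]
    have e4 : (1-t) ^ v = (1-t) ^ (n-k) * (1-t) ^ (b+1) := by
      rw [show v = ((n-k:ℕ):ℝ)+(b+1) by rw [hv_def]; ring, rpow_split h1t]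
    rw [e3, e4]; ring
  have hpt1 : ∀ t ∈ Set.Ioo (0:ℝ) 1,
      t ^ a * (1-t) ^ b *
        ((u * (t ^ k * (1-t) ^ ((n-k)+1)) - v * (t ^ (k+1) * (1-t) ^ (n-k))) * f t)
      = (u * t ^ (u-1) * (1-t) ^ v - v * t ^ u * (1-t) ^ (v-1)) * f t := by
    intro t ht
    have h1t : (0:ℝ) < 1 - t := by linarith [ht.2]
    have e1 : t ^ (u-1) = t ^ k * t ^ a := by
      rw [show u-1 = (k:ℝ)+a by rw [hu_def]; ring, rpow_split ht.1]
    have e2 : (1-t) ^ v = (1-t) ^ ((n-k)+1) * (1-t) ^ b := by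
      rw [show v = (((n-k)+1:ℕ):ℝ)+b by rw [hv_def]; push_cast; ring, rpow_split h1t]
    have e3 : t ^ u = t ^ (k+1) * t ^ a := by
      rw [show u = ((k+1:ℕ):ℝ)+a by rw [hu_def]; push_cast; ring, rpow_split ht.1]
    have e4 : (1-t) ^ (v-1) = (1-t) ^ (n-k) * (1-t) ^ b := by
      rw [show v-1 = ((n-k:ℕ):ℝ)+b by rw [hv_def]; ring, rpow_split h1t]
    rw [e1, e2, e3, e4]; ring
  have hint1 : IntervalIntegrable
      (fun t : ℝ => (u * t ^ (u-1) * (1-t) ^ v - v * t ^ u * (1-t) ^ (v-1)) * f t) volume 0 1 :=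
    intervalIntegrable_congr_Ioo hpt1
      (intWg a b ha hb (g := fun t : ℝ =>
        (u * (t ^ k * (1-t) ^ ((n-k)+1)) - v * (t ^ (k+1) * (1-t) ^ (n-k))) * f t)
        (by fun_prop))
  have hint2 : IntervalIntegrable (fun t : ℝ => t ^ u * (1-t) ^ v * f' t) volume 0 1 :=
    intervalIntegrable_congr_Ioo hpt2
      (intWg (a+1) (b+1) (by linarith) (by linarith)
        (g := fun t : ℝ => t ^ k * (1-t) ^ (n-k) * f' t) (by fun_prop))
  have hfc := ftc_core u v hu hv f f' hf (fun t _ => hder t) hint1 hint2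
  -- identify the two integrals
  set C : ℝ := (n.choose k : ℝ) with hC_def
  have hCpos : (0:ℝ) < C := by
    simp only [hC_def]; exact_mod_cast Nat.choose_pos hk
  have eq1 : C * (∫ t in (0:ℝ)..1, t ^ u * (1-t) ^ v * f' t)
      = ∫ t in (0:ℝ)..1, bern n k t * t ^ (a+1) * (1-t) ^ (b+1) * f' t := by
    rw [← intervalIntegral.integral_const_mul]
    apply integral_congr_Ioo
    intro t ht
    rw [← hpt2 t ht]
    unfold bern
    simp only [hC_def]
    ring
  have hch1 := choose_cast1 hk
  have hch2 := choose_cast2 n k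
  have hsub1 : (n+1) - k = (n-k) + 1 := by omega
  have hsub2 : (n+1) - (k+1) = n - k := by omega
  have eq2 : ((n:ℝ)+1) * C * (∫ t in (0:ℝ)..1,
        (u * t ^ (u-1) * (1-t) ^ v - v * t ^ u * (1-t) ^ (v-1)) * f t)
      = u * ((n:ℝ)+1-k) * (∫ t in (0:ℝ)..1, bern (n+1) k t * t ^ a * (1-t) ^ b * f t)
        - v * ((k:ℝ)+1) * (∫ t in (0:ℝ)..1, bern (n+1) (k+1) t * t ^ a * (1-t) ^ b * f t) := by
    rw [← intervalIntegral.integral_const_mul]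
    rw [show (∫ t in (0:ℝ)..1, bern (n+1) k t * t ^ a * (1-t) ^ b * f t)
        = ∫ t in (0:ℝ)..1, bern (n+1) k t * t ^ a * (1-t) ^ b * f t from rfl]
    rw [← intervalIntegral.integral_const_mul (u * ((n:ℝ)+1-k)),
        ← intervalIntegral.integral_const_mul (v * ((k:ℝ)+1)),
        ← intervalIntegral.integral_sub
          ((intBern a b ha hb (n+1) k hf).const_mul _)
          ((intBern a b ha hb (n+1) (k+1) hf).const_mul _)]
    apply integral_congr_Ioo
    intro t ht
    rw [← hpt1 t ht]
    unfold bern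
    rw [hsub1, hsub2]
    linear_combination (t ^ k * (1-t) ^ ((n-k)+1) * (t^a * (1-t)^b) * f t * u) * hch1
      - (t ^ (k+1) * (1-t) ^ (n-k) * (t^a * (1-t)^b) * f t * v) * hch2
  -- assemble
  have hveq : v = (n:ℝ)+1-k+b - 0 := by rw [hv_def, hcast]; ring
  have hueq : u = (k:ℝ)+a+1 := hu_def
  have final := congrArg (fun z => ((n:ℝ)+1) * C * z) hfc
  simp only [mul_add, mul_zero] at final
  -- final : (n+1)*C*∫₁ + (n+1)*C*∫₂ = 0
  have e1' : ((n:ℝ)+1) * C * (∫ t in (0:ℝ)..1, t ^ u * (1-t) ^ v * f' t)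
      = ((n:ℝ)+1) * (∫ t in (0:ℝ)..1, bern n k t * t ^ (a+1) * (1-t) ^ (b+1) * f' t) := by
    rw [← eq1]; ring
  rw [show ((n:ℝ)+1) * C * (∫ t in (0:ℝ)..1,
        (u * t ^ (u-1) * (1-t) ^ v - v * t ^ u * (1-t) ^ (v-1)) * f t)
      = u * ((n:ℝ)+1-k) * (∫ t in (0:ℝ)..1, bern (n+1) k t * t ^ a * (1-t) ^ b * f t)
        - v * ((k:ℝ)+1) * (∫ t in (0:ℝ)..1, bern (n+1) (k+1) t * t ^ a * (1-t) ^ b * f t)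
      from eq2, e1'] at final
  have hveq2 : v = (n:ℝ)+1-k+b := by rw [hv_def, hcast]; ring
  rw [hueq, hveq2] at final
  rw [hu_def]
  linear_combination final


lemma c_eq_m (a b : ℝ) (N k : ℕ) :
    (∫ t in (0:ℝ)..1, bern N k t * t ^ a * (1-t) ^ b) = (N.choose k : ℝ) * mJ a b k (N-k) := by
  rw [mJ, ← intervalIntegral.integral_const_mul]
  apply intervalIntegral.integral_congr
  intro t _
  unfold bern; ring

lemma c'_eq_m (a b : ℝ) (n k : ℕ) :
    (∫ t in (0:ℝ)..1, bern n k t * t ^ (a+1) * (1-t) ^ (b+1))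
      = (n.choose k : ℝ) * mJ a b (k+1) ((n-k)+1) := by
  rw [mJ, ← intervalIntegral.integral_const_mul]
  apply integral_congr_Ioo
  intro t ht
  have h1t : (0:ℝ) < 1 - t := by linarith [ht.2]
  rw [Real.rpow_add_one ht.1.ne' a, Real.rpow_add_one h1t.ne' b]
  unfold bern; ring

lemma idB (a b : ℝ) (ha : -1 < a) (hb : -1 < b) {n k : ℕ} (hk : k ≤ n) :
    ((k:ℝ)+a+1) * ((n:ℝ)+1-k) * (∫ t in (0:ℝ)..1, bern (n+1) k t * t ^ a * (1-t) ^ b)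
    = ((n:ℝ)+1) * ((n:ℝ)+a+b+3) *
        (∫ t in (0:ℝ)..1, bern n k t * t ^ (a+1) * (1-t) ^ (b+1)) := by
  rw [c_eq_m, c'_eq_m]
  have hsub : (n+1) - k = (n-k) + 1 := by omega
  rw [hsub]
  have key := m_keyB ha hb k (n-k)
  have hcast : ((n-k:ℕ):ℝ) = (n:ℝ)-(k:ℝ) := by rw [Nat.cast_sub hk]
  rw [hcast] at key
  have hch1 := choose_cast1 hk
  linear_combination (((n:ℝ)+1-k) * ((n+1).choose k : ℝ)) * key
    - (((n:ℝ)+a+b+3) * mJ a b (k+1) ((n-k)+1)) * hch1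

lemma A_step (a b : ℝ) (ha : -1 < a) (hb : -1 < b) {n k : ℕ} (hk : k ≤ n)
    (f f' : ℝ → ℝ) (hf : Continuous f) (hf' : Continuous f')
    (hder : ∀ t, HasDerivAt f (f' t) t) :
    (∫ t in (0:ℝ)..1, bern (n+1) (k+1) t * t ^ a * (1-t) ^ b * f t) /
        (∫ t in (0:ℝ)..1, bern (n+1) (k+1) t * t ^ a * (1-t) ^ b)
      - (∫ t in (0:ℝ)..1, bern (n+1) k t * t ^ a * (1-t) ^ b * f t) /
        (∫ t in (0:ℝ)..1, bern (n+1) k t * t ^ a * (1-t) ^ b)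
    = (1/((n:ℝ)+a+b+3)) *
        ((∫ t in (0:ℝ)..1, bern n k t * t ^ (a+1) * (1-t) ^ (b+1) * f' t) /
          (∫ t in (0:ℝ)..1, bern n k t * t ^ (a+1) * (1-t) ^ (b+1))) := by
  set I0 := ∫ t in (0:ℝ)..1, bern (n+1) k t * t ^ a * (1-t) ^ b * f t
  set I1 := ∫ t in (0:ℝ)..1, bern (n+1) (k+1) t * t ^ a * (1-t) ^ b * f t
  set J := ∫ t in (0:ℝ)..1, bern n k t * t ^ (a+1) * (1-t) ^ (b+1) * f' t
  set c0 := ∫ t in (0:ℝ)..1, bern (n+1) k t * t ^ a * (1-t) ^ b with hc0_def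
  set c1 := ∫ t in (0:ℝ)..1, bern (n+1) (k+1) t * t ^ a * (1-t) ^ b with hc1_def
  set c' := ∫ t in (0:ℝ)..1, bern n k t * t ^ (a+1) * (1-t) ^ (b+1) with hc'_def
  have hc0 : 0 < c0 := c_pos a b ha hb (hk.trans (Nat.le_succ n))
  have hc1 : 0 < c1 := c_pos a b ha hb (Nat.succ_le_succ hk)
  have hc' : 0 < c' := c_pos (a+1) (b+1) (by linarith) (by linarith) hk
  have hS : (0:ℝ) < (n:ℝ)+a+b+3 := by
    have : (0:ℝ) ≤ n := Nat.cast_nonneg n; linarith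
  have hI := key_ibp a b ha hb n k hk f f' hf hf' hder
  have hC := key_ibp a b ha hb n k hk (fun _ => (1:ℝ)) (fun _ => (0:ℝ)) continuous_const
    continuous_const (fun t => hasDerivAt_const t 1)
  simp only [mul_one, mul_zero, intervalIntegral.integral_zero] at hC
  -- hC : 0 = e1 * c1 - e0 * c0
  have hB := idB a b ha hb hk
  have hn1 : ((n:ℝ)+1) ≠ 0 := by have : (0:ℝ) ≤ n := Nat.cast_nonneg n; linarith
  have key : ((n:ℝ)+a+b+3) * c' * (I1 * c0 - I0 * c1) = J * (c1 * c0) := by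
    have key2 : (((n:ℝ)+a+b+3) * c' * (I1 * c0 - I0 * c1)) * ((n:ℝ)+1)
        = (J * (c1 * c0)) * ((n:ℝ)+1) := by
      linear_combination (-(c0 * c1)) * hI + (I1 * c0) * hC - (I1 * c0 - I0 * c1) * hB
    exact mul_right_cancel₀ hn1 key2
  rw [div_sub_div _ _ hc1.ne' hc0.ne']
  rw [show (1/((n:ℝ)+a+b+3)) * (J/c') = J / (((n:ℝ)+a+b+3)*c') by
    rw [div_mul_eq_mul_div, one_mul, div_div, mul_comm]]
  rw [div_eq_div_iff (by positivity) (by positivity : ((n:ℝ)+a+b+3)*c' ≠ 0)]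
  linear_combination key


lemma hasDerivAt_bern (N k : ℕ) (x : ℝ) :
    HasDerivAt (bern N k)
      ((N.choose k : ℝ) * ((k:ℝ) * x^(k-1) * (1-x)^(N-k)
        - ((N-k:ℕ):ℝ) * x^k * (1-x)^(N-k-1))) x := by
  have h1 := hasDerivAt_pow k x
  have hin : HasDerivAt (fun y : ℝ => 1 - y) (-1) x := by
    simpa using (hasDerivAt_id' x).const_sub (1:ℝ)
  have h2 : HasDerivAt (fun y : ℝ => (1-y)^(N-k))
      ((((N-k:ℕ)):ℝ) * (1-x)^(N-k-1) * (-1)) x := by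
    exact (hasDerivAt_pow (N-k) (1-x)).comp x hin
  have h3 := (h1.mul h2).const_mul (N.choose k : ℝ)
  have h4 : bern N k = fun y : ℝ => (N.choose k:ℝ) * (y^k * (1-y)^(N-k)) := by
    funext y; unfold bern; ring
  rw [h4]
  refine h3.congr_deriv ?_
  ring

/-- the derivative formula for the Durrmeyer operator -/
lemma hasDerivAt_durr (a b : ℝ) (ha : -1 < a) (hb : -1 < b) (n : ℕ)
    (g g' : ℝ → ℝ) (hg : Continuous g) (hg' : Continuous g')
    (hder : ∀ t, HasDerivAt g (g' t) t) (x : ℝ) :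
    HasDerivAt (durrmeyerJ a b (n+1) g)
      (((n:ℝ)+1)/((n:ℝ)+a+b+3) * durrmeyerJ (a+1) (b+1) n g' x) x := by
  set A : ℕ → ℝ := fun k =>
    (∫ t in (0:ℝ)..1, bern (n+1) k t * t ^ a * (1-t) ^ b * g t) /
      (∫ t in (0:ℝ)..1, bern (n+1) k t * t ^ a * (1-t) ^ b) with hA_def
  set A' : ℕ → ℝ := fun k =>
    (∫ t in (0:ℝ)..1, bern n k t * t ^ (a+1) * (1-t) ^ (b+1) * g' t) /
      (∫ t in (0:ℝ)..1, bern n k t * t ^ (a+1) * (1-t) ^ (b+1)) with hA'_def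
  have hsum : HasDerivAt (durrmeyerJ a b (n+1) g)
      (∑ k ∈ Finset.range (n+2), ((n+1).choose k : ℝ) *
        ((k:ℝ) * x^(k-1) * (1-x)^(n+1-k)
          - ((n+1-k:ℕ):ℝ) * x^k * (1-x)^(n+1-k-1)) * A k) x := by
    have : durrmeyerJ a b (n+1) g = fun y =>
        ∑ k ∈ Finset.range (n+2), bern (n+1) k y * A k := rfl
    rw [this]
    apply HasDerivAt.fun_sum
    intro k _
    exact (hasDerivAt_bern (n+1) k x).mul_const (A k)
  have hval : (∑ k ∈ Finset.range (n+2), ((n+1).choose k : ℝ) *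
        ((k:ℝ) * x^(k-1) * (1-x)^(n+1-k)
          - ((n+1-k:ℕ):ℝ) * x^k * (1-x)^(n+1-k-1)) * A k)
      = ((n:ℝ)+1)/((n:ℝ)+a+b+3) * durrmeyerJ (a+1) (b+1) n g' x := by
    have hsplit : ∀ k, ((n+1).choose k : ℝ) *
        ((k:ℝ) * x^(k-1) * (1-x)^(n+1-k)
          - ((n+1-k:ℕ):ℝ) * x^k * (1-x)^(n+1-k-1)) * A k
        = ((n+1).choose k : ℝ) * (k:ℝ) * x^(k-1) * (1-x)^(n+1-k) * A k
          - ((n+1).choose k : ℝ) * ((n+1-k:ℕ):ℝ) * x^k * (1-x)^(n+1-k-1) * A k := by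
      intro k; ring
    rw [Finset.sum_congr rfl (fun k _ => hsplit k), Finset.sum_sub_distrib]
    have hT1 : (∑ k ∈ Finset.range (n+2),
        ((n+1).choose k : ℝ) * (k:ℝ) * x^(k-1) * (1-x)^(n+1-k) * A k)
        = ∑ i ∈ Finset.range (n+1), ((n:ℝ)+1) * bern n i x * A (i+1) := by
      rw [Finset.sum_range_succ']
      simp only [Nat.cast_zero, mul_zero, zero_mul, add_zero]
      apply Finset.sum_congr rfl
      intro i hi
      have hi' : i ≤ n := Nat.lt_succ_iff.mp (Finset.mem_range.mp hi)
      have e1 : (i+1) - 1 = i := rfl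
      have e2 : n+1-(i+1) = n-i := by omega
      rw [e1, e2]
      have hch := choose_cast2 n i
      unfold bern
      push_cast
      linear_combination (x^i * (1-x)^(n-i) * A (i+1)) * hch.symm
    have hT2 : (∑ k ∈ Finset.range (n+2),
        ((n+1).choose k : ℝ) * ((n+1-k:ℕ):ℝ) * x^k * (1-x)^(n+1-k-1) * A k)
        = ∑ k ∈ Finset.range (n+1), ((n:ℝ)+1) * bern n k x * A k := by
      rw [Finset.sum_range_succ]
      have hlast : ((n+1).choose (n+1) : ℝ) * ((n+1-(n+1):ℕ):ℝ) * x^(n+1)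
          * (1-x)^(n+1-(n+1)-1) * A (n+1) = 0 := by
        simp
      rw [hlast, add_zero]
      apply Finset.sum_congr rfl
      intro k hk
      have hk' : k ≤ n := Nat.lt_succ_iff.mp (Finset.mem_range.mp hk)
      have e2 : n+1-k-1 = n-k := by omega
      have e3 : ((n+1-k:ℕ):ℝ) = (n:ℝ)+1-(k:ℝ) := by
        rw [Nat.cast_sub (by omega)]; push_cast; ring
      rw [e2, e3]
      have hch := choose_cast1 hk'
      unfold bern
      linear_combination (x^k * (1-x)^(n-k) * A k) * hch.symm
    rw [hT1, hT2, ← Finset.sum_sub_distrib]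
    have hstep : ∀ k ∈ Finset.range (n+1),
        ((n:ℝ)+1) * bern n k x * A (k+1) - ((n:ℝ)+1) * bern n k x * A k
        = ((n:ℝ)+1)/((n:ℝ)+a+b+3) * (bern n k x * A' k) := by
      intro k hk
      have hk' : k ≤ n := Nat.lt_succ_iff.mp (Finset.mem_range.mp hk)
      have hAs := A_step a b ha hb hk' g g' hg hg' hder
      have : A (k+1) - A k = (1/((n:ℝ)+a+b+3)) * A' k := hAs
      calc ((n:ℝ)+1) * bern n k x * A (k+1) - ((n:ℝ)+1) * bern n k x * A k
          = ((n:ℝ)+1) * bern n k x * (A (k+1) - A k) := by ring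
        _ = ((n:ℝ)+1) * bern n k x * ((1/((n:ℝ)+a+b+3)) * A' k) := by rw [this]
        _ = ((n:ℝ)+1)/((n:ℝ)+a+b+3) * (bern n k x * A' k) := by ring
    rw [Finset.sum_congr rfl hstep, ← Finset.mul_sum]
    rfl
  rw [← hval]
  exact hsum


noncomputable def cst (a b : ℝ) (n r : ℕ) : ℝ :=
  ∏ i ∈ Finset.range r, ((n:ℝ) - i) / ((n:ℝ) + a + b + 2 + i)

lemma iter_deriv_durr (r : ℕ) : ∀ (a b : ℝ), -1 < a → -1 < b → ∀ (n : ℕ), r ≤ n →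
    ∀ (f : ℝ → ℝ), ContDiff ℝ r f →
    iteratedDeriv r (durrmeyerJ a b n f)
      = fun x => cst a b n r * durrmeyerJ (a+r) (b+r) (n-r) (iteratedDeriv r f) x := by
  induction r with
  | zero =>
    intro a b ha hb n hr f hf
    funext x
    simp [cst, iteratedDeriv_zero]
  | succ r IH =>
    intro a b ha hb n hr f hf
    have hr' : r ≤ n := le_trans (Nat.le_succ r) hr
    have hfr : ContDiff ℝ r f := hf.of_le (by exact_mod_cast Nat.le_succ r)
    rw [iteratedDeriv_succ, IH a b ha hb n hr' f hfr]
    set m : ℕ := n - (r+1) with hm_def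
    have hnm : n - r = m + 1 := by omega
    have hg : Continuous (iteratedDeriv r f) :=
      hf.continuous_iteratedDeriv r (by exact_mod_cast Nat.le_succ r)
    have hg' : Continuous (iteratedDeriv (r+1) f) :=
      hf.continuous_iteratedDeriv (r+1) (by exact_mod_cast le_refl (r+1))
    have hdiff : Differentiable ℝ (iteratedDeriv r f) :=
      hf.differentiable_iteratedDeriv r (by exact_mod_cast Nat.lt_succ_self r)
    have hder : ∀ t, HasDerivAt (iteratedDeriv r f) (iteratedDeriv (r+1) f t) t := by
      intro t
      rw [iteratedDeriv_succ]
      exact (hdiff t).hasDerivAt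
    funext x
    have hD := hasDerivAt_durr (a+r) (b+r) (by linarith [Nat.cast_nonneg (α := ℝ) r])
      (by linarith [Nat.cast_nonneg (α := ℝ) r]) m
      (iteratedDeriv r f) (iteratedDeriv (r+1) f) hg hg' hder x
    rw [← hnm] at hD
    have hderiv_eq : deriv (fun x => cst a b n r *
        durrmeyerJ (a+r) (b+r) (n-r) (iteratedDeriv r f) x) x
        = cst a b n r * (((m:ℝ)+1)/((m:ℝ)+(a+r)+(b+r)+3)
            * durrmeyerJ (a+r+1) (b+r+1) m (iteratedDeriv (r+1) f) x) := by
      exact (hD.const_mul (cst a b n r)).deriv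
  -- now identify constants
    rw [hderiv_eq]
    have hcast1 : ((m:ℝ)+1) = (n:ℝ) - r := by
      rw [hm_def, Nat.cast_sub hr]; push_cast; ring
    have hcst : cst a b n (r+1) = cst a b n r * (((m:ℝ)+1)/((m:ℝ)+(a+r)+(b+r)+3)) := by
      rw [cst, Finset.prod_range_succ]
      rw [show ((m:ℝ)+(a+r)+(b+r)+3) = (n:ℝ)+a+b+2+r by
        rw [hm_def, Nat.cast_sub hr]; push_cast; ring, hcast1]
      rfl
    have hab1 : a + ((r:ℕ):ℝ) + 1 = a + (((r+1:ℕ)):ℝ) := by push_cast; ring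
    have hab2 : b + ((r:ℕ):ℝ) + 1 = b + (((r+1:ℕ)):ℝ) := by push_cast; ring
    rw [hcst, hab1, hab2, hm_def]
    ring


lemma cst_nonneg (a b : ℝ) (hab : 0 < a + b + 2) {n r : ℕ} (hr : r ≤ n) :
    0 ≤ cst a b n r := by
  apply Finset.prod_nonneg
  intro i hi
  have hi' : i < r := Finset.mem_range.mp hi
  have h1 : (i:ℝ) ≤ (n:ℝ) := by exact_mod_cast le_of_lt (lt_of_lt_of_le hi' hr)
  have h2 : (0:ℝ) ≤ (i:ℝ) := Nat.cast_nonneg i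
  have h3 : (0:ℝ) ≤ (n:ℝ) := Nat.cast_nonneg n
  apply div_nonneg <;> linarith

lemma gamma_cst (a b : ℝ) (hab : 0 < a + b + 2) (n : ℕ) :
    ∀ r : ℕ, r ≤ n →
    Real.Gamma ((n:ℝ)+1) * Real.Gamma ((n:ℝ)+a+b+2) /
      (Real.Gamma ((n:ℝ)-(r:ℝ)+1) * Real.Gamma ((n:ℝ)+a+b+(r:ℝ)+2)) = cst a b n r := by
  intro r
  induction r with
  | zero =>
    intro _
    have h1 : (0:ℝ) < Real.Gamma ((n:ℝ)+1) :=
      Real.Gamma_pos_of_pos (by positivity)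
    have h2 : (0:ℝ) < Real.Gamma ((n:ℝ)+a+b+2) :=
      Real.Gamma_pos_of_pos (by have : (0:ℝ) ≤ n := Nat.cast_nonneg n; linarith)
    simp only [Nat.cast_zero, sub_zero, add_zero]
    rw [div_self (by positivity)]
    simp [cst]
  | succ r IH =>
    intro hr
    have hr' : r ≤ n := le_trans (Nat.le_succ r) hr
    have hnr : (0:ℝ) < (n:ℝ) - r := by
      have : (r:ℝ) + 1 ≤ (n:ℝ) := by exact_mod_cast hr
      linarith
    have hS : (0:ℝ) < (n:ℝ)+a+b+r+2 := by
      have : (0:ℝ) ≤ (n:ℝ) := Nat.cast_nonneg n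
      have : (0:ℝ) ≤ (r:ℝ) := Nat.cast_nonneg r
      linarith [Nat.cast_nonneg (α := ℝ) n]
    have hA : Real.Gamma ((n:ℝ)-(r:ℝ)+1) = ((n:ℝ)-r) * Real.Gamma ((n:ℝ)-r) :=
      Real.Gamma_add_one hnr.ne'
    have hB : Real.Gamma ((n:ℝ)+a+b+((r:ℝ)+1)+2)
        = ((n:ℝ)+a+b+r+2) * Real.Gamma ((n:ℝ)+a+b+r+2) := by
      rw [show (n:ℝ)+a+b+((r:ℝ)+1)+2 = ((n:ℝ)+a+b+(r:ℝ)+2)+1 by ring]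
      exact Real.Gamma_add_one hS.ne'
    have hGnr : (0:ℝ) < Real.Gamma ((n:ℝ)-r) := Real.Gamma_pos_of_pos hnr
    have hGS : (0:ℝ) < Real.Gamma ((n:ℝ)+a+b+r+2) := Real.Gamma_pos_of_pos hS
    have IH' := IH hr'
    rw [cst, Finset.prod_range_succ, ← cst, ← IH']
    push_cast
    rw [show (n:ℝ)-((r:ℝ)+1)+1 = (n:ℝ)-r by ring, hB, hA]
    rw [div_mul_div_comm]
    rw [div_eq_div_iff
      (mul_ne_zero hGnr.ne' (mul_pos hS hGS).ne')
      (mul_ne_zero (mul_ne_zero (mul_pos hnr hGnr).ne' hGS.ne')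
        (show ((n:ℝ)+a+b+2+(r:ℝ)) ≠ 0 from (by linarith : (0:ℝ) < (n:ℝ)+a+b+2+(r:ℝ)).ne'))]
    ring

theorem durrmeyerJ_derivative_bound
    (α β : ℝ) (hα : -1 < α) (hβ : -1 < β)
    (n r : ℕ) (hr : r ≤ n)
    (f : ℝ → ℝ) (hf : ContDiff ℝ r f) :
    ∀ x ∈ Set.Icc (0:ℝ) 1,
      |iteratedDeriv r (durrmeyerJ α β n f) x| ≤
        Real.Gamma ((n : ℝ) + 1) * Real.Gamma ((n : ℝ) + α + β + 2) /
            (Real.Gamma ((n : ℝ) - (r : ℝ) + 1) * Real.Gamma ((n : ℝ) + α + β + (r : ℝ) + 2)) *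
          supNorm (iteratedDeriv r f) := by
  intro x hx
  have h1 := iter_deriv_durr r α β hα hβ n hr f hf
  rw [h1]
  have hg : Continuous (iteratedDeriv r f) := hf.continuous_iteratedDeriv r le_rfl
  have hrn : (0:ℝ) ≤ (r:ℝ) := Nat.cast_nonneg r
  have hd := durr_bound (α+r) (β+r) (by linarith) (by linarith) (n-r) hg hx
  have hc0 : 0 ≤ cst α β n r := cst_nonneg α β (by linarith) hr
  have hγ := gamma_cst α β (by linarith) n r hr
  rw [hγ]
  show |cst α β n r * durrmeyerJ (α+r) (β+r) (n-r) (iteratedDeriv r f) x| ≤ _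
  rw [abs_mul, abs_of_nonneg hc0]
  exact mul_le_mul_of_nonneg_left hd hc0
end
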